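/- arXiv:1711.07299 — 7 statements merged into one kernel-verified Lean document; each statement's English description precedes it below -/
import Mathlib

section
/- Let {B_t}_{t∈ℝ} be a weakly differentiable family of bounded operators on a complex Hilbert space H, with weak derivative family {(∂B)_t}. Then for any continuously differentiable functions ξ, ψ : ℝ → H, the function t ↦ ⟨ξ(t), B_t ψ(t)⟩ is continuously differentiable, with derivative ⟨ξ'(t), B_t ψ(t)⟩ + ⟨ξ(t), B_t ψ'(t)⟩ + ⟨ξ(t), (∂B)_t ψ(t)⟩. -/
open scoped InnerProductSpace

open Filter Set

/-- Let `{B t}` be a weakly differentiable family of bounded operators on a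
complex Hilbert space `H`, with weak derivative family `B'`. Then for any continuously
differentiable `ξ ψ : ℝ → H`, the function `t ↦ ⟪ξ t, B t (ψ t)⟫` is continuously
differentiable with derivative `⟪ξ' t, B t (ψ t)⟫ + ⟪ξ t, B t (ψ' t)⟫ + ⟪ξ t, B' t (ψ t)⟫`. -/
theorem weakly_differentiable_family_inner_C1
    {H : Type*} [NormedAddCommGroup H] [InnerProductSpace ℂ H] [CompleteSpace H]
    (B B' : ℝ → H →L[ℂ] H)
    (hweakcont : ∀ ξ ψ : H, Continuous fun t : ℝ => ⟪ξ, B' t ψ⟫_ℂ)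
    (hderiv : ∀ (ξ ψ : H) (t : ℝ),
      HasDerivAt (fun s : ℝ => ⟪ξ, B s ψ⟫_ℂ) ⟪ξ, B' t ψ⟫_ℂ t)
    (ξ ψ ξ' ψ' : ℝ → H)
    (hξ : ∀ t : ℝ, HasDerivAt ξ (ξ' t) t) (hξ' : Continuous ξ')
    (hψ : ∀ t : ℝ, HasDerivAt ψ (ψ' t) t) (hψ' : Continuous ψ') :
    (∀ t : ℝ, HasDerivAt (fun s : ℝ => ⟪ξ s, B s (ψ s)⟫_ℂ)
        (⟪ξ' t, B t (ψ t)⟫_ℂ + ⟪ξ t, B t (ψ' t)⟫_ℂ + ⟪ξ t, B' t (ψ t)⟫_ℂ) t) ∧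
      Continuous (fun t : ℝ =>
        ⟪ξ' t, B t (ψ t)⟫_ℂ + ⟪ξ t, B t (ψ' t)⟫_ℂ + ⟪ξ t, B' t (ψ t)⟫_ℂ) := by
  have hξc : Continuous ξ := continuous_iff_continuousAt.2 fun t => (hξ t).continuousAt
  have hψc : Continuous ψ := continuous_iff_continuousAt.2 fun t => (hψ t).continuousAt
  -- Step 1: local bound on ‖B' s‖ via Banach–Steinhaus (twice)
  have hB'bd : ∀ t : ℝ, ∃ C : ℝ, 0 ≤ C ∧ ∀ s ∈ Icc (t - 1) (t + 1), ‖B' s‖ ≤ C := by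
    intro t
    have key : ∀ ψ₀ : H, ∃ C, ∀ i : Icc (t - 1) (t + 1), ‖B' i ψ₀‖ ≤ C := by
      intro ψ₀
      have h2 : ∀ x : H, ∃ C, ∀ i : Icc (t - 1) (t + 1),
          ‖(innerSL ℂ (B' i ψ₀)) x‖ ≤ C := by
        intro x
        obtain ⟨C, hC⟩ := (isCompact_Icc (a := t - 1) (b := t + 1)).exists_bound_of_continuousOn
          (f := fun s : ℝ => ⟪x, B' s ψ₀⟫_ℂ) (hweakcont x ψ₀).continuousOn
        refine ⟨C, fun i => ?_⟩
        have := hC i i.2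
        rwa [innerSL_apply_apply, norm_inner_symm]
      obtain ⟨C, hC⟩ := banach_steinhaus h2
      exact ⟨C, fun i => by simpa [innerSL_apply_norm] using hC i⟩
    obtain ⟨C, hC⟩ := banach_steinhaus
      (g := fun i : Icc (t - 1) (t + 1) => B' i) (fun ψ₀ => key ψ₀)
    exact ⟨max C 0, le_max_right _ _, fun s hs => le_trans (hC ⟨s, hs⟩) (le_max_left _ _)⟩
  -- Step 2: B is locally Lipschitz in operator norm
  have hBlip : ∀ t : ℝ, ∃ C : ℝ, 0 ≤ C ∧
      ∀ s ∈ Icc (t - 1) (t + 1), ‖B s - B t‖ ≤ C * |s - t| := by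
    intro t
    obtain ⟨C, hC0, hC⟩ := hB'bd t
    refine ⟨C, hC0, fun s hs => ?_⟩
    have htmem : t ∈ Icc (t - 1) (t + 1) := ⟨by linarith, by linarith⟩
    -- scalar estimate via the mean value inequality
    have hscal : ∀ ξ₀ ψ₀ : H, ‖⟪ξ₀, B s ψ₀⟫_ℂ - ⟪ξ₀, B t ψ₀⟫_ℂ‖ ≤
        (C * ‖ξ₀‖ * ‖ψ₀‖) * |s - t| := by
      intro ξ₀ ψ₀
      have := Convex.norm_image_sub_le_of_norm_hasDerivWithin_le
        (f := fun u : ℝ => ⟪ξ₀, B u ψ₀⟫_ℂ) (f' := fun u : ℝ => ⟪ξ₀, B' u ψ₀⟫_ℂ)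
        (s := Icc (t - 1) (t + 1)) (C := C * ‖ξ₀‖ * ‖ψ₀‖)
        (fun u _ => (hderiv ξ₀ ψ₀ u).hasDerivWithinAt)
        (fun u hu => by
          calc ‖⟪ξ₀, B' u ψ₀⟫_ℂ‖ ≤ ‖ξ₀‖ * ‖B' u ψ₀‖ := norm_inner_le_norm _ _
            _ ≤ ‖ξ₀‖ * (‖B' u‖ * ‖ψ₀‖) :=
                mul_le_mul_of_nonneg_left ((B' u).le_opNorm _) (norm_nonneg _)
            _ ≤ ‖ξ₀‖ * (C * ‖ψ₀‖) := by
                have := hC u hu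
                gcongr
            _ = C * ‖ξ₀‖ * ‖ψ₀‖ := by ring)
        (convex_Icc _ _) htmem hs
      simpa [Real.norm_eq_abs] using this
    -- vector estimate
    have hvec : ∀ ψ₀ : H, ‖(B s - B t) ψ₀‖ ≤ (C * |s - t|) * ‖ψ₀‖ := by
      intro ψ₀
      set v : H := B s ψ₀ - B t ψ₀ with hv
      have h1 : ⟪v, B s ψ₀⟫_ℂ - ⟪v, B t ψ₀⟫_ℂ = ⟪v, v⟫_ℂ := by
        rw [← inner_sub_right]
      have h2 : ‖v‖ * ‖v‖ ≤ (C * ‖v‖ * ‖ψ₀‖) * |s - t| := by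
        have := hscal v ψ₀
        rw [h1, inner_self_eq_norm_sq_to_K] at this
        calc ‖v‖ * ‖v‖ = ‖((‖v‖ : ℂ)) ^ 2‖ := by
              simp [pow_two, Complex.norm_real]
          _ ≤ (C * ‖v‖ * ‖ψ₀‖) * |s - t| := this
      have hfinal : ‖v‖ ≤ C * |s - t| * ‖ψ₀‖ := by
        rcases eq_or_lt_of_le (norm_nonneg v) with h | h
        · rw [← h]; positivity
        · nlinarith [h2]
      simpa [hv] using hfinal
    exact ContinuousLinearMap.opNorm_le_bound _ (by positivity) hvec
  -- Step 3: B is continuous in operator norm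
  have hBc : Continuous B := by
    rw [continuous_iff_continuousAt]
    intro t
    rw [ContinuousAt, tendsto_iff_norm_sub_tendsto_zero]
    obtain ⟨C, hC0, hC⟩ := hBlip t
    have h1 : ∀ᶠ s in nhds t, ‖B s - B t‖ ≤ C * |s - t| := by
      filter_upwards [Icc_mem_nhds (by linarith : t - 1 < t) (by linarith : t < t + 1)]
        with s hs using hC s hs
    have h2 : Tendsto (fun s : ℝ => C * |s - t|) (nhds t) (nhds 0) := by
      have h3 : Tendsto (fun s : ℝ => s - t) (nhds t) (nhds (t - t)) :=
        (continuous_id.sub continuous_const).tendsto t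
      rw [sub_self] at h3
      simpa using (h3.abs.const_mul C)
    exact squeeze_zero' (.of_forall fun s => norm_nonneg _) h1 h2
  -- Step 4: continuity of the third component
  have h3c : Continuous fun t : ℝ => ⟪ξ t, B' t (ψ t)⟫_ℂ := by
    rw [continuous_iff_continuousAt]
    intro t
    obtain ⟨C, hC0, hC⟩ := hB'bd t
    have hev : Icc (t - 1) (t + 1) ∈ nhds t :=
      Icc_mem_nhds (by linarith) (by linarith)
    have key : ∀ s : ℝ, ⟪ξ s, B' s (ψ s)⟫_ℂ =
        ⟪ξ s - ξ t, B' s (ψ s)⟫_ℂ + ⟪ξ t, B' s (ψ s - ψ t)⟫_ℂ + ⟪ξ t, B' s (ψ t)⟫_ℂ := by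
      intro s
      rw [inner_sub_left, map_sub, inner_sub_right]
      ring
    have l1 : Tendsto (fun s : ℝ => ⟪ξ s - ξ t, B' s (ψ s)⟫_ℂ) (nhds t) (nhds 0) := by
      apply squeeze_zero_norm' (a := fun s : ℝ => ‖ξ s - ξ t‖ * (C * ‖ψ s‖))
      · filter_upwards [hev] with s hs
        calc ‖⟪ξ s - ξ t, B' s (ψ s)⟫_ℂ‖ ≤ ‖ξ s - ξ t‖ * ‖B' s (ψ s)‖ :=
              norm_inner_le_norm _ _
          _ ≤ ‖ξ s - ξ t‖ * (C * ‖ψ s‖) := by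
              have h4 : ‖B' s (ψ s)‖ ≤ C * ‖ψ s‖ :=
                le_trans ((B' s).le_opNorm _)
                  (mul_le_mul_of_nonneg_right (hC s hs) (norm_nonneg _))
              exact mul_le_mul_of_nonneg_left h4 (norm_nonneg _)
      · have h5 : Tendsto (fun s : ℝ => ‖ξ s - ξ t‖) (nhds t) (nhds ‖ξ t - ξ t‖) :=
          ((hξc.sub continuous_const).norm).tendsto t
        rw [sub_self, norm_zero] at h5
        simpa using h5.mul (((hψc.norm).tendsto t).const_mul C)
    have l2 : Tendsto (fun s : ℝ => ⟪ξ t, B' s (ψ s - ψ t)⟫_ℂ) (nhds t) (nhds 0) := by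
      apply squeeze_zero_norm' (a := fun s : ℝ => ‖ξ t‖ * (C * ‖ψ s - ψ t‖))
      · filter_upwards [hev] with s hs
        calc ‖⟪ξ t, B' s (ψ s - ψ t)⟫_ℂ‖ ≤ ‖ξ t‖ * ‖B' s (ψ s - ψ t)‖ :=
              norm_inner_le_norm _ _
          _ ≤ ‖ξ t‖ * (C * ‖ψ s - ψ t‖) := by
              have h4 : ‖B' s (ψ s - ψ t)‖ ≤ C * ‖ψ s - ψ t‖ :=
                le_trans ((B' s).le_opNorm _)
                  (mul_le_mul_of_nonneg_right (hC s hs) (norm_nonneg _))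
              exact mul_le_mul_of_nonneg_left h4 (norm_nonneg _)
      · have h5 : Tendsto (fun s : ℝ => ‖ψ s - ψ t‖) (nhds t) (nhds ‖ψ t - ψ t‖) :=
          ((hψc.sub continuous_const).norm).tendsto t
        rw [sub_self, norm_zero] at h5
        simpa using (h5.const_mul C).const_mul (‖ξ t‖)
    have l3 : Tendsto (fun s : ℝ => ⟪ξ t, B' s (ψ t)⟫_ℂ) (nhds t)
        (nhds ⟪ξ t, B' t (ψ t)⟫_ℂ) := (hweakcont (ξ t) (ψ t)).tendsto t
    have := (l1.add l2).add l3
    rw [ContinuousAt]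
    refine (this.congr fun s => (key s).symm).congr' ?_ |>.mono_right ?_
    · rfl
    · simp
  -- application map continuity
  have happ : Continuous (fun p : (H →L[ℂ] H) × H => p.1 p.2) :=
    isBoundedBilinearMap_apply.continuous
  -- Step 5: the derivative statement
  refine ⟨fun t => ?_, ?_⟩
  · rw [hasDerivAt_iff_tendsto_slope]
    have hsξ : Tendsto (slope ξ t) (nhdsWithin t {t}ᶜ) (nhds (ξ' t)) :=
      hasDerivAt_iff_tendsto_slope.1 (hξ t)
    have hsψ : Tendsto (slope ψ t) (nhdsWithin t {t}ᶜ) (nhds (ψ' t)) :=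
      hasDerivAt_iff_tendsto_slope.1 (hψ t)
    have hs3 : Tendsto (slope (fun u : ℝ => ⟪ξ t, B u (ψ t)⟫_ℂ) t)
        (nhdsWithin t {t}ᶜ) (nhds ⟪ξ t, B' t (ψ t)⟫_ℂ) :=
      hasDerivAt_iff_tendsto_slope.1 (hderiv (ξ t) (ψ t) t)
    have hBψ : Tendsto (fun s : ℝ => B s (ψ s)) (nhdsWithin t {t}ᶜ)
        (nhds (B t (ψ t))) :=
      ((hBc.clm_apply hψc).tendsto t).mono_left nhdsWithin_le_nhds
    have hBt : Tendsto B (nhdsWithin t {t}ᶜ) (nhds (B t)) :=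
      (hBc.tendsto t).mono_left nhdsWithin_le_nhds
    have l1 : Tendsto (fun s : ℝ => ⟪slope ξ t s, B s (ψ s)⟫_ℂ)
        (nhdsWithin t {t}ᶜ) (nhds ⟪ξ' t, B t (ψ t)⟫_ℂ) := hsξ.inner hBψ
    have l2' : Tendsto (fun s : ℝ => B s (slope ψ t s)) (nhdsWithin t {t}ᶜ)
        (nhds (B t (ψ' t))) :=
      (happ.tendsto (B t, ψ' t)).comp (hBt.prodMk_nhds hsψ)
    have l2 : Tendsto (fun s : ℝ => ⟪ξ t, B s (slope ψ t s)⟫_ℂ)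
        (nhdsWithin t {t}ᶜ) (nhds ⟪ξ t, B t (ψ' t)⟫_ℂ) :=
      tendsto_const_nhds.inner l2'
    have heq : ∀ s : ℝ, slope (fun u : ℝ => ⟪ξ u, B u (ψ u)⟫_ℂ) t s =
        ⟪slope ξ t s, B s (ψ s)⟫_ℂ + ⟪ξ t, B s (slope ψ t s)⟫_ℂ +
          slope (fun u : ℝ => ⟪ξ t, B u (ψ t)⟫_ℂ) t s := by
      intro s
      simp only [slope_def_module]
      rw [RCLike.real_smul_eq_coe_smul (K := ℂ) (s - t)⁻¹ (ξ s - ξ t),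
        RCLike.real_smul_eq_coe_smul (K := ℂ) (s - t)⁻¹ (ψ s - ψ t),
        RCLike.real_smul_eq_coe_smul (K := ℂ) (s - t)⁻¹
          (⟪ξ s, B s (ψ s)⟫_ℂ - ⟪ξ t, B t (ψ t)⟫_ℂ),
        RCLike.real_smul_eq_coe_smul (K := ℂ) (s - t)⁻¹
          (⟪ξ t, B s (ψ t)⟫_ℂ - ⟪ξ t, B t (ψ t)⟫_ℂ),
        inner_smul_left, map_smul, inner_smul_right]
      simp only [RCLike.conj_ofReal, smul_eq_mul, inner_sub_left, map_sub,
        inner_sub_right]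
      ring
    exact (((l1.add l2).add hs3).congr fun s => (heq s).symm)
  · exact ((hξ'.inner (hBc.clm_apply hψc)).add (hξc.inner (hBc.clm_apply hψ'))).add h3c
end

section
/- Let {B_t}_{t∈ℝ} be a strongly differentiable family of bounded operators on a complex Hilbert space H, with strong derivative family {(∂B)_t}. In the Banach space C₀(ℝ,H) of continuous H-valued functions vanishing at infinity (with the supremum norm), consider the densely defined operator T₁ : ψ ↦ (t ↦ (∂B)_t ψ(t)) with domain the compactly supported continuous H-valued functions C_c(ℝ,H), and the densely defined operator T₂ : ψ ↦ (d/dt)(B_• ψ) − B_•(dψ/dt) (where (B_•ψ)(t) = B_t ψ(t)) with domain the compactly supported continuously differentiable H-valued functions C_c¹(ℝ,H). Then T₁ and T₂ are closable and their closures coincide. -/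
open scoped ZeroAtInfty Convolution Topology Pointwise
open Filter Metric MeasureTheory Asymptotics Function

section Aux


variable {H : Type*} [NormedAddCommGroup H] [NormedSpace ℂ H]

/-- Banach–Steinhaus on a compact set, for a strongly continuous family. -/
lemma bs_bound [CompleteSpace H] (C : ℝ → H →L[ℂ] H)
    (hC : ∀ x : H, Continuous fun t => C t x) (K : Set ℝ) (hK : IsCompact K) :
    ∃ M : ℝ, 1 ≤ M ∧ ∀ t ∈ K, ‖C t‖ ≤ M := by
  obtain ⟨M0, hM0⟩ := banach_steinhaus (g := fun t : K => C t) (fun x => by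
    obtain ⟨M1, hM1⟩ := hK.exists_bound_of_continuousOn (hC x).continuousOn
    exact ⟨M1, fun i => hM1 i i.2⟩)
  exact ⟨max M0 1, le_max_right _ _, fun t ht => le_trans (hM0 ⟨t, ht⟩) (le_max_left _ _)⟩

/-- A strongly continuous family applied to a continuous function is continuous. -/
lemma cont_apply [CompleteSpace H] (C : ℝ → H →L[ℂ] H)
    (hC : ∀ x : H, Continuous fun t => C t x) {ψ : ℝ → H} (hψ : Continuous ψ) :
    Continuous fun t => C t (ψ t) := by
  rw [continuous_iff_continuousAt]
  intro t₀
  obtain ⟨M, hM1, hM⟩ := bs_bound C hC (closedBall t₀ 1) (isCompact_closedBall _ _)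
  have hA : Tendsto (fun s => ‖ψ s - ψ t₀‖) (𝓝 t₀) (𝓝 0) :=
    tendsto_iff_norm_sub_tendsto_zero.mp (hψ.tendsto t₀)
  have hBt : Tendsto (fun s => ‖C s (ψ t₀) - C t₀ (ψ t₀)‖) (𝓝 t₀) (𝓝 0) :=
    tendsto_iff_norm_sub_tendsto_zero.mp ((hC (ψ t₀)).tendsto t₀)
  have key : Tendsto (fun s => C s (ψ s) - C t₀ (ψ t₀)) (𝓝 t₀) (𝓝 0) := by
    have h1 : Tendsto (fun s => M * ‖ψ s - ψ t₀‖ + ‖C s (ψ t₀) - C t₀ (ψ t₀)‖)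
        (𝓝 t₀) (𝓝 0) := by
      have := (hA.const_mul M).add hBt
      simpa using this
    apply squeeze_zero_norm' _ h1
    filter_upwards [closedBall_mem_nhds t₀ one_pos] with s hs
    calc ‖C s (ψ s) - C t₀ (ψ t₀)‖
        = ‖C s (ψ s - ψ t₀) + (C s (ψ t₀) - C t₀ (ψ t₀))‖ := by
          simp only [map_sub]; abel
      _ ≤ ‖C s (ψ s - ψ t₀)‖ + ‖C s (ψ t₀) - C t₀ (ψ t₀)‖ := norm_add_le _ _
      _ ≤ M * ‖ψ s - ψ t₀‖ + ‖C s (ψ t₀) - C t₀ (ψ t₀)‖ := by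
          gcongr
          exact ((C s).le_opNorm _).trans (by gcongr; exact hM s hs)
  have := key.add (tendsto_const_nhds (x := C t₀ (ψ t₀)))
  simpa [ContinuousAt] using this

/-- Product rule for a strongly differentiable family applied to a differentiable function. -/
lemma strong_prod_rule [CompleteSpace H] {B B' : ℝ → H →L[ℂ] H}
    (hB : ∀ (x : H) (t : ℝ), HasDerivAt (fun s : ℝ => B s x) (B' t x) t)
    {ψ : ℝ → H} {v : H} {t₀ : ℝ} (hψ : HasDerivAt ψ v t₀) :
    HasDerivAt (fun s : ℝ => B s (ψ s)) (B' t₀ (ψ t₀) + B t₀ v) t₀ := by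
  have hBc : ∀ x : H, Continuous fun t => B t x :=
    fun x => continuous_iff_continuousAt.mpr fun t => (hB x t).continuousAt
  obtain ⟨M, hM1, hM⟩ := bs_bound B hBc (closedBall t₀ 1) (isCompact_closedBall _ _)
  have h1 : HasDerivAt (fun s => B s (ψ t₀)) (B' t₀ (ψ t₀)) t₀ := hB _ _
  have h2 : HasDerivAt (fun s => B t₀ (ψ s)) (B t₀ v) t₀ := by
    have := (hasDerivAt_const t₀ ((B t₀).restrictScalars ℝ)).clm_apply hψ
    simpa using this
  have h3 : HasDerivAt (fun s => (B s - B t₀) (ψ s - ψ t₀)) 0 t₀ := by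
    rw [hasDerivAt_iff_isLittleO]
    simp only [sub_self, map_zero, smul_zero, sub_zero]
    have hw : (fun s => ψ s - ψ t₀ - (s - t₀) • v) =o[𝓝 t₀] fun s => s - t₀ :=
      hasDerivAt_iff_isLittleO.mp hψ
    have hA : (fun s => (B s - B t₀) (ψ s - ψ t₀ - (s - t₀) • v)) =o[𝓝 t₀]
        fun s => s - t₀ := by
      refine IsBigO.trans_isLittleO ?_ hw
      refine IsBigO.of_bound (2 * M) ?_
      filter_upwards [closedBall_mem_nhds t₀ one_pos] with s hs
      calc ‖(B s - B t₀) (ψ s - ψ t₀ - (s - t₀) • v)‖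
          ≤ ‖B s - B t₀‖ * ‖ψ s - ψ t₀ - (s - t₀) • v‖ :=
            ContinuousLinearMap.le_opNorm _ _
        _ ≤ (2 * M) * ‖ψ s - ψ t₀ - (s - t₀) • v‖ := by
            gcongr
            calc ‖B s - B t₀‖ ≤ ‖B s‖ + ‖B t₀‖ := norm_sub_le _ _
              _ ≤ M + M := add_le_add (hM s hs) (hM t₀ (mem_closedBall_self one_pos.le))
              _ = 2 * M := by ring
    have hCpart : (fun s => (s - t₀) • ((B s - B t₀) v)) =o[𝓝 t₀] fun s => s - t₀ := by
      have hu : (fun s => (B s - B t₀) v) =o[𝓝 t₀] (fun _ => (1 : ℝ)) := by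
        rw [isLittleO_one_iff]
        have : Tendsto (fun s => B s v - B t₀ v) (𝓝 t₀) (𝓝 (B t₀ v - B t₀ v)) :=
          ((hBc v).tendsto t₀).sub tendsto_const_nhds
        simpa [ContinuousLinearMap.sub_apply] using this
      have := (isBigO_refl (fun s : ℝ => s - t₀) (𝓝 t₀)).smul_isLittleO hu
      simpa using this
    have hsum := hA.add hCpart
    refine hsum.congr' (Eventually.of_forall fun s => ?_) EventuallyEq.rfl
    have : (B s - B t₀) ((s - t₀) • v) = (s - t₀) • ((B s - B t₀) v) :=
      ContinuousLinearMap.map_smul_of_tower _ _ _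
    simp only [map_sub, this]
    abel
  have hcomb := ((h1.add h2).sub_const (B t₀ (ψ t₀))).add h3
  have heq : (fun s : ℝ => B s (ψ s)) =
      fun s => B s (ψ t₀) + B t₀ (ψ s) - B t₀ (ψ t₀) + (B s - B t₀) (ψ s - ψ t₀) := by
    funext s
    simp only [ContinuousLinearMap.sub_apply, map_sub]
    abel
  rw [heq]
  simpa [Pi.add_def] using hcomb

/-- Build an element of `C₀(ℝ, H)` from a compactly supported continuous function. -/
def C0ofCompact (f : ℝ → H) (hc : Continuous f) (hs : HasCompactSupport f) : C₀(ℝ, H) :=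
  ⟨⟨f, hc⟩, hs.is_zero_at_infty⟩

@[simp] lemma coe_C0ofCompact (f : ℝ → H) (hc : Continuous f) (hs : HasCompactSupport f) :
    ⇑(C0ofCompact f hc hs) = f := rfl

lemma C0_dist_le {f g : C₀(ℝ, H)} {C : ℝ} (h0 : 0 ≤ C) (h : ∀ x, dist (f x) (g x) ≤ C) :
    dist f g ≤ C := by
  rw [← ZeroAtInftyContinuousMap.dist_toBCF_eq_dist]
  exact (BoundedContinuousFunction.dist_le h0).mpr h

lemma C0_continuous_eval (t : ℝ) : Continuous fun f : C₀(ℝ, H) => f t := by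
  have h1 : Continuous fun f : BoundedContinuousFunction ℝ H => f t :=
    continuous_eval_const t
  exact h1.comp (ZeroAtInftyContinuousMap.isometry_toBCF (α := ℝ) (β := H)).continuous

end Aux

/-- The graph of the operator `T₁ : ψ ↦ (t ↦ B' t (ψ t))` on the Banach space `C₀(ℝ, H)`,
with domain the compactly supported continuous `H`-valued functions. -/
def graphDerivFamily {H : Type*} [NormedAddCommGroup H] [NormedSpace ℂ H]
    (B' : ℝ → H →L[ℂ] H) : Set (C₀(ℝ, H) × C₀(ℝ, H)) :=
  {p | HasCompactSupport ⇑p.1 ∧ ∀ t : ℝ, p.2 t = B' t (p.1 t)}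

/-- The graph of the operator `T₂ : ψ ↦ (d/dt)(B_• ψ) − B_• (dψ/dt)` on the Banach space
`C₀(ℝ, H)`, with domain the compactly supported continuously differentiable `H`-valued
functions (here `(B_• ψ)(t) = B t (ψ t)`). -/
def graphCommutator {H : Type*} [NormedAddCommGroup H] [NormedSpace ℂ H]
    (B : ℝ → H →L[ℂ] H) : Set (C₀(ℝ, H) × C₀(ℝ, H)) :=
  {p | HasCompactSupport ⇑p.1 ∧
    ∃ ψ' : C₀(ℝ, H), (∀ t : ℝ, HasDerivAt (⇑p.1) (ψ' t) t) ∧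
      ∃ g : ℝ → H, (∀ t : ℝ, HasDerivAt (fun s : ℝ => B s (p.1 s)) (g t) t) ∧
        ∀ t : ℝ, p.2 t = g t - B t (ψ' t)}

/-- For a strongly differentiable family `{B t}` of bounded operators on a
complex Hilbert space `H` with strong derivative family `B'`, the operators `T₁` and `T₂` on
`C₀(ℝ, H)` are closable and have the same closure: the closures of their graphs coincide and
are single-valued (i.e. are themselves graphs of operators). -/
theorem closure_graphDerivFamily_eq_closure_graphCommutator
    {H : Type*} [NormedAddCommGroup H] [InnerProductSpace ℂ H] [CompleteSpace H]
    (B B' : ℝ → H →L[ℂ] H)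
    (hB : ∀ (ψ : H) (t : ℝ), HasDerivAt (fun s : ℝ => B s ψ) (B' t ψ) t)
    (hB' : ∀ ψ : H, Continuous fun t : ℝ => B' t ψ) :
    closure (graphDerivFamily B') = closure (graphCommutator B) ∧
      ∀ y : C₀(ℝ, H), ((0 : C₀(ℝ, H)), y) ∈ closure (graphDerivFamily B') → y = 0 := by
  have hsub : graphCommutator B ⊆ graphDerivFamily B' := by
    rintro ⟨p₁, p₂⟩ ⟨hsupp, ψ', hψ', g, hg, hp2⟩
    refine ⟨hsupp, fun t => ?_⟩
    have huniq : g t = B' t (p₁ t) + B t (ψ' t) :=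
      (hg t).unique (strong_prod_rule hB (hψ' t))
    rw [hp2 t, huniq]
    abel
  constructor
  · refine Set.Subset.antisymm ?_ (closure_mono hsub)
    refine closure_minimal ?_ isClosed_closure
    rintro ⟨ψC, χC⟩ ⟨hsupp, hχ⟩
    rw [Metric.mem_closure_iff]
    intro ε hε
    set K := Metric.closedBall (0 : ℝ) 1 + tsupport ⇑ψC with hK
    have hKcomp : IsCompact K := (isCompact_closedBall _ _).add hsupp
    obtain ⟨M, hM1, hM⟩ := bs_bound B' hB' K hKcomp
    have hMpos : (0 : ℝ) < M := lt_of_lt_of_le one_pos hM1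
    set ε' := ε / (2 * M) with hε'
    have hε'pos : 0 < ε' := div_pos hε (by linarith)
    have hu : UniformContinuous ⇑ψC := ZeroAtInftyContinuousMap.uniformContinuous ψC
    obtain ⟨δ, hδpos, hδ⟩ := Metric.uniformContinuous_iff.mp hu ε' hε'pos
    set δ' := min δ 1 with hδ'
    have hδ'pos : 0 < δ' := lt_min hδpos one_pos
    set φ : ContDiffBump (0 : ℝ) := ⟨δ' / 2, δ', by positivity, half_lt_self hδ'pos⟩ with hφ
    set χa : ℝ → H := (φ.normed volume) ⋆[ContinuousLinearMap.lsmul ℝ ℝ, volume] ⇑ψC with hχa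
    have hψc : Continuous ⇑ψC := map_continuous ψC
    have hψm : AEStronglyMeasurable ⇑ψC volume := hψc.aestronglyMeasurable
    have hχasmooth : ContDiff ℝ ((⊤ : ℕ∞) : WithTop ℕ∞) χa := by
      exact HasCompactSupport.contDiff_convolution_left (n := ⊤)
        (μ := MeasureTheory.volume) (ContinuousLinearMap.lsmul ℝ ℝ)
        (φ.hasCompactSupport_normed (μ := MeasureTheory.volume))
        (φ.contDiff_normed (μ := MeasureTheory.volume)) hψc.locallyIntegrable
    have hχasupp : HasCompactSupport χa :=
      HasCompactSupport.convolution _ (φ.hasCompactSupport_normed (μ := MeasureTheory.volume))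
        hsupp
    -- pointwise approximation
    have hpt : ∀ x : ℝ, dist (χa x) (ψC x) ≤ ε' := by
      intro x
      refine φ.dist_normed_convolution_le hψm fun y hy => ?_
      refine (hδ ?_).le
      have : dist y x < δ' := mem_ball.mp hy
      exact lt_of_lt_of_le this (min_le_left _ _)
    -- supports
    have hψsuppK : tsupport ⇑ψC ⊆ K := fun x hx => by
      rw [hK]
      have h0 : (0 : ℝ) + x ∈ Metric.closedBall (0 : ℝ) 1 + tsupport ⇑ψC :=
        Set.add_mem_add (Metric.mem_closedBall_self one_pos.le) hx
      simpa using h0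
    have hχsuppK : Function.support χa ⊆ K := by
      refine (support_convolution_subset _).trans ?_
      rw [hK]
      refine Set.add_subset_add ?_ (subset_tsupport _)
      rw [φ.support_normed_eq]
      exact Metric.ball_subset_closedBall.trans
        (Metric.closedBall_subset_closedBall (min_le_right _ _))
    have hzero : ∀ x ∉ K, ψC x = 0 ∧ χa x = 0 := by
      intro x hx
      constructor
      · by_contra h
        exact hx (hψsuppK (subset_tsupport _ h))
      · by_contra h
        exact hx (hχsuppK h)
    -- the C₀ elements
    set χaC : C₀(ℝ, H) := C0ofCompact χa hχasmooth.continuous hχasupp with hχaC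
    set ψ'C : C₀(ℝ, H) :=
      C0ofCompact (deriv χa) (hχasmooth.continuous_deriv (by exact_mod_cast le_top)) hχasupp.deriv with hψ'C
    have hηcont : Continuous fun t => B' t (χa t) := cont_apply B' hB' hχasmooth.continuous
    have hηsupp : HasCompactSupport fun t => B' t (χa t) := by
      refine hχasupp.mono' ?_
      intro x hx
      have : χa x ≠ 0 := by
        intro h0
        apply hx
        simp [h0]
      exact subset_tsupport _ this
    set ηC : C₀(ℝ, H) := C0ofCompact _ hηcont hηsupp with hηC
    have hder : ∀ t : ℝ, HasDerivAt χa (deriv χa t) t :=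
      fun t => ((hχasmooth.differentiable (by simp)) t).hasDerivAt
    refine ⟨(χaC, ηC), ⟨hχasupp, ψ'C, hder, fun t => B' t (χa t) + B t (deriv χa t),
      fun t => strong_prod_rule hB (hder t), fun t => ?_⟩, ?_⟩
    · show B' t (χa t) = B' t (χa t) + B t (deriv χa t) - B t (deriv χa t)
      abel
    · rw [Prod.dist_eq]
      have half : ε / 2 < ε := half_lt_self hε
      have hε'half : ε' ≤ ε / 2 := by
        rw [hε']
        gcongr
        linarith
      refine max_lt (lt_of_le_of_lt ?_ half) (lt_of_le_of_lt ?_ half)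
      · refine C0_dist_le (by positivity) fun x => ?_
        rw [dist_comm]
        exact (hpt x).trans hε'half
      · refine C0_dist_le (by positivity) fun x => ?_
        show dist (χC x) (B' x (χa x)) ≤ ε / 2
        rw [hχ x, dist_eq_norm, ← map_sub]
        by_cases hx : x ∈ K
        · calc ‖B' x (ψC x - χa x)‖ ≤ ‖B' x‖ * ‖ψC x - χa x‖ :=
              ContinuousLinearMap.le_opNorm _ _
            _ ≤ M * ε' := by
                refine mul_le_mul (hM x hx) ?_ (norm_nonneg _) (by linarith)
                rw [← dist_eq_norm]
                rw [dist_comm]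
                exact hpt x
            _ = ε / 2 := by
                rw [hε']
                field_simp
        · obtain ⟨h1, h2⟩ := hzero x hx
          simp [h1, h2]
          positivity
  · intro y hy
    have hclosed : IsClosed {p : C₀(ℝ, H) × C₀(ℝ, H) | ∀ t : ℝ, p.2 t = B' t (p.1 t)} := by
      have : {p : C₀(ℝ, H) × C₀(ℝ, H) | ∀ t : ℝ, p.2 t = B' t (p.1 t)} =
          ⋂ t : ℝ, {p : C₀(ℝ, H) × C₀(ℝ, H) | p.2 t = B' t (p.1 t)} := by
        ext p; simp
      rw [this]
      exact isClosed_iInter fun t => isClosed_eq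
        ((C0_continuous_eval t).comp continuous_snd)
        ((B' t).continuous.comp ((C0_continuous_eval t).comp continuous_fst))
    have hmem := closure_minimal (fun p hp => hp.2) hclosed hy
    ext t
    have := hmem t
    simpa using this
end

section
/- Under the stated hypotheses, the maximal domain of the operator DT satisfies {ψ ∈ H : Tψ ∈ Dom D} = Dom D, and consequently the operator ψ ↦ D(Tψ) with domain Dom D is a closed operator on H. -/
open scoped InnerProductSpace
open Filter

namespace Statement6Aux

variable {H : Type*} [NormedAddCommGroup H] [InnerProductSpace ℂ H] [CompleteSpace H]

lemma symm_of_selfAdjoint {D : H →ₗ.[ℂ] H} (hsa : IsSelfAdjoint D) (x y : D.domain) :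
    ⟪D x, (y : H)⟫_ℂ = ⟪(x : H), D y⟫_ℂ := by
  have hdense : Dense (D.domain : Set H) := hsa.dense_domain
  have heq : D.adjoint = D := hsa
  have h := LinearPMap.adjoint_isFormalAdjoint hdense (T := D)
  obtain ⟨hdom, hval⟩ := LinearPMap.ext_iff.mp heq
  have hy : (y : H) ∈ D.adjoint.domain := by rw [hdom]; exact y.2
  have h2 := h ⟨(y : H), hy⟩ x
  have h3 : D.adjoint ⟨(y : H), hy⟩ = D y := @hval _ hy y.2
  rw [h3] at h2
  have h4 := congrArg (starRingEnd ℂ) h2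
  rw [inner_conj_symm, inner_conj_symm] at h4
  exact h4.symm

lemma graph_closed_of_selfAdjoint {D : H →ₗ.[ℂ] H} (hsa : IsSelfAdjoint D) :
    IsClosed (D.graph : Set (H × H)) := by
  have hdense : Dense (D.domain : Set H) := hsa.dense_domain
  rw [← isSeqClosed_iff_isClosed]
  intro f p hf hp
  choose x hx1 hx2 using fun n => D.mem_graph_iff.mp (hf n)
  have h1 : Tendsto (fun n => (f n).1) atTop (nhds p.1) :=
    ((continuous_fst.tendsto p).comp hp)
  have h2 : Tendsto (fun n => (f n).2) atTop (nhds p.2) :=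
    ((continuous_snd.tendsto p).comp hp)
  have key : ∀ v : D.domain, ⟪p.2, (v : H)⟫_ℂ = ⟪p.1, D v⟫_ℂ := by
    intro v
    refine tendsto_nhds_unique (f := fun n => ⟪(f n).2, (v : H)⟫_ℂ)
      (h2.inner tendsto_const_nhds) ?_
    have he : (fun n => ⟪(f n).2, (v : H)⟫_ℂ) = fun n => ⟪(f n).1, D v⟫_ℂ := by
      funext n
      rw [← hx1 n, ← hx2 n]
      exact symm_of_selfAdjoint hsa (x n) v
    rw [he]
    exact h1.inner tendsto_const_nhds
  have hmem : p.1 ∈ D.adjoint.domain :=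
    LinearPMap.mem_adjoint_domain_of_exists _ ⟨p.2, fun v => key v⟩
  have hval : D.adjoint ⟨p.1, hmem⟩ = p.2 :=
    LinearPMap.adjoint_apply_eq hdense _ fun v => key v
  have hg : (p.1, p.2) ∈ D.adjoint.graph := by
    rw [LinearPMap.mem_graph_iff]
    exact ⟨⟨p.1, hmem⟩, rfl, hval⟩
  have heq : D.adjoint = D := hsa
  rw [heq] at hg
  simpa using hg

set_option maxHeartbeats 1000000 in
set_option synthInstance.maxHeartbeats 200000 in
lemma inv_mem_domain {D : H →ₗ.[ℂ] H} (hclosed : IsClosed (D.graph : Set (H × H)))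
    (S Sinv : H →L[ℂ] H)
    (hSinv : ∀ x, Sinv (S x) = x)
    (hSdom : ∀ x ∈ D.domain, S x ∈ D.domain)
    {C ε c : ℝ} (hC : 0 ≤ C) (hε : 0 < ε) (hc : 0 < c) (hcC : c * C < 2 * ε)
    (hlow : ∀ x : H, ε * ‖x‖ ^ 2 ≤ (⟪S x, x⟫_ℂ).re)
    (hcomm : ∀ ψ : D.domain, ‖D ⟨S ψ, hSdom ψ ψ.2⟩ - S (D ψ)‖ ≤ C * ‖(ψ : H)‖) :
    ∀ x ∈ D.domain, Sinv x ∈ D.domain := by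
  classical
  have hcne : (c : ℂ) ≠ 0 := by exact_mod_cast hc.ne'
  set DS : D.domain → D.domain := fun x => ⟨S x, hSdom x x.2⟩ with hDS
  have DS_coe : ∀ x : D.domain, ((DS x : D.domain) : H) = S x := fun x => rfl
  have DSadd : ∀ x y : D.domain, DS (x + y) = DS x + DS y := fun x y =>
    Subtype.ext (by simp [hDS])
  have DSsmul : ∀ (a : ℂ) (x : D.domain), DS (a • x) = a • DS x := fun a x =>
    Subtype.ext (by simp [hDS])
  have DSsub : ∀ x y : D.domain, DS (x - y) = DS x - DS y := fun x y =>
    Subtype.ext (by simp [hDS])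
  let ℓ : D.domain →ₗ[ℂ] WithLp 2 (H × H) :=
    { toFun := fun x => (WithLp.equiv 2 (H × H)).symm (S x, (c : ℂ) • D (DS x))
      map_add' := fun x y => by
        show (WithLp.equiv 2 (H × H)).symm (S ↑(x + y), (c : ℂ) • D (DS (x + y)))
            = (WithLp.equiv 2 (H × H)).symm (S ↑x, (c : ℂ) • D (DS x))
              + (WithLp.equiv 2 (H × H)).symm (S ↑y, (c : ℂ) • D (DS y))
        rw [DSadd, D.map_add, WithLp.equiv_symm_apply, ← WithLp.toLp_add]
        congr 1
        rw [Prod.mk_add_mk, Prod.mk.injEq]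
        exact ⟨by simp, smul_add _ _ _⟩
      map_smul' := fun a x => by
        show (WithLp.equiv 2 (H × H)).symm (S ↑(a • x), (c : ℂ) • D (DS (a • x)))
            = a • (WithLp.equiv 2 (H × H)).symm (S ↑x, (c : ℂ) • D (DS x))
        rw [DSsmul, D.map_smul, WithLp.equiv_symm_apply, ← WithLp.toLp_smul]
        congr 1
        rw [Prod.smul_mk, Prod.mk.injEq]
        exact ⟨by simp, smul_comm _ _ _⟩ }
  have hℓ : ∀ x : D.domain,
      ℓ x = (WithLp.equiv 2 (H × H)).symm (S x, (c : ℂ) • D (DS x)) := fun x => rfl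
  set V : Submodule ℂ (WithLp 2 (H × H)) := LinearMap.range ℓ with hV
  have hβsub : ∀ x y : D.domain,
      (D (DS x) - S (D x)) - (D (DS y) - S (D y)) = D (DS (x - y)) - S (D (x - y)) := by
    intro x y
    rw [DSsub, D.map_sub, D.map_sub, map_sub]
    abel
  -- V is closed
  have hVclosed : IsClosed (V : Set (WithLp 2 (H × H))) := by
    rw [← isSeqClosed_iff_isClosed]
    intro f p hf hp
    choose xs hxs using fun n => LinearMap.mem_range.mp (hf n)
    have hcont1 : Continuous fun w : WithLp 2 (H × H) => (WithLp.equiv 2 (H × H) w).1 :=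
      continuous_fst.comp (WithLp.prod_continuous_ofLp 2 H H)
    have hcont2 : Continuous fun w : WithLp 2 (H × H) => (WithLp.equiv 2 (H × H) w).2 :=
      continuous_snd.comp (WithLp.prod_continuous_ofLp 2 H H)
    have hfst : ∀ n, WithLp.equiv 2 (H × H) (f n)
        = (S (xs n : H), (c : ℂ) • D (DS (xs n))) := by
      intro n; rw [← hxs n, hℓ]; exact (WithLp.equiv 2 (H × H)).apply_symm_apply _
    set q1 := (WithLp.equiv 2 (H × H) p).1 with hq1
    set q2 := (WithLp.equiv 2 (H × H) p).2 with hq2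
    have ha : Tendsto (fun n => S ((xs n : H))) atTop (nhds q1) := by
      have h := (hcont1.tendsto p).comp hp
      refine h.congr fun n => ?_
      simp only [Function.comp_apply, hfst]
    have hb2 : Tendsto (fun n => (c : ℂ) • D (DS (xs n))) atTop (nhds q2) := by
      have h := (hcont2.tendsto p).comp hp
      refine h.congr fun n => ?_
      simp only [Function.comp_apply, hfst]
    have hb : Tendsto (fun n => D (DS (xs n))) atTop (nhds ((c : ℂ)⁻¹ • q2)) := by
      have h := hb2.const_smul ((c : ℂ)⁻¹)
      refine h.congr fun n => ?_
      rw [smul_smul, inv_mul_cancel₀ hcne, one_smul]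
    have hx : Tendsto (fun n => ((xs n : H))) atTop (nhds (Sinv q1)) := by
      have h := (Sinv.continuous.tendsto q1).comp ha
      refine h.congr fun n => ?_
      simp only [Function.comp_apply, hSinv]
    have hxc : CauchySeq fun n => ((xs n : H)) := hx.cauchySeq
    have hβc : CauchySeq fun n => D (DS (xs n)) - S (D (xs n)) := by
      rw [Metric.cauchySeq_iff] at hxc ⊢
      intro δ hδ
      obtain ⟨N, hN⟩ := hxc (δ / (C + 1)) (by positivity)
      refine ⟨N, fun m hm k hk => ?_⟩
      have h1 := hN m hm k hk
      have h2 : dist (D (DS (xs m)) - S (D (xs m))) (D (DS (xs k)) - S (D (xs k)))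
          ≤ C * dist ((xs m : H)) ((xs k : H)) := by
        rw [dist_eq_norm, dist_eq_norm]
        calc ‖(D (DS (xs m)) - S (D (xs m))) - (D (DS (xs k)) - S (D (xs k)))‖
            = ‖D (DS (xs m - xs k)) - S (D (xs m - xs k))‖ := by rw [hβsub]
          _ ≤ C * ‖((xs m - xs k : D.domain) : H)‖ := hcomm _
          _ = C * ‖(xs m : H) - (xs k : H)‖ := by norm_cast
      have h3 : C * dist ((xs m : H)) ((xs k : H)) < δ := by
        have h4 : C * dist ((xs m : H)) ((xs k : H)) ≤ (C + 1) * dist ((xs m : H)) ((xs k : H)) := by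
          have := dist_nonneg (x := ((xs m : H))) (y := ((xs k : H)))
          nlinarith
        have h5 : (C + 1) * dist ((xs m : H)) ((xs k : H)) < (C + 1) * (δ / (C + 1)) := by
          exact mul_lt_mul_of_pos_left h1 (by positivity)
        rw [mul_div_cancel₀ _ (by positivity : (C : ℝ) + 1 ≠ 0)] at h5
        linarith
      exact lt_of_le_of_lt h2 h3
    obtain ⟨bb, hbb⟩ := cauchySeq_tendsto_of_complete hβc
    have hDx : Tendsto (fun n => D (xs n)) atTop
        (nhds (Sinv ((c : ℂ)⁻¹ • q2 - bb))) := by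
      have h := (Sinv.continuous.tendsto _).comp (hb.sub hbb)
      refine h.congr fun n => ?_
      simp only [Function.comp_apply, sub_sub_cancel, hSinv]
    have hx0 : ((Sinv q1, Sinv ((c : ℂ)⁻¹ • q2 - bb)) : H × H) ∈ D.graph := by
      refine hclosed.isSeqClosed (fun n => D.mem_graph (xs n)) ?_
      exact hx.prodMk_nhds hDx
    have hq : ((q1, (c : ℂ)⁻¹ • q2) : H × H) ∈ D.graph := by
      refine hclosed.isSeqClosed (fun n => D.mem_graph (DS (xs n))) ?_
      exact ha.prodMk_nhds hb
    have hmem : Sinv q1 ∈ D.domain := D.mem_domain_of_mem_graph hx0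
    refine LinearMap.mem_range.mpr ⟨⟨Sinv q1, hmem⟩, ?_⟩
    have hS1 : S (Sinv q1) = q1 := by
      refine tendsto_nhds_unique ?_ ha
      have h := (S.continuous.tendsto _).comp hx
      exact h
    have hq1mem : q1 ∈ D.domain := by rw [← hS1]; exact hSdom _ hmem
    have hDval : D ⟨q1, hq1mem⟩ = (c : ℂ)⁻¹ • q2 := ((D.image_iff hq1mem).mpr hq).symm
    have hDSeq : DS ⟨Sinv q1, hmem⟩ = ⟨q1, hq1mem⟩ := Subtype.ext hS1
    rw [hℓ, hDSeq, hDval, hS1, smul_smul, mul_inv_cancel₀ hcne, one_smul]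
    rw [hq1, hq2, Prod.mk.eta]
    exact (WithLp.equiv 2 (H × H)).symm_apply_apply p
  -- conclusion via orthogonal decomposition
  intro χ hχ
  haveI : CompleteSpace V := hVclosed.completeSpace_coe
  obtain ⟨u, hu, w, hw, hdecomp⟩ := V.exists_add_mem_mem_orthogonal
    ((WithLp.equiv 2 (H × H)).symm (χ, (c : ℂ) • D ⟨χ, hχ⟩))
  obtain ⟨xu, hxu⟩ := LinearMap.mem_range.mp hu
  set χ' : D.domain := ⟨χ, hχ⟩ - DS xu with hχ'
  have hw' : w = (WithLp.equiv 2 (H × H)).symm ((χ' : H), (c : ℂ) • D χ') := by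
    have h1 : w = (WithLp.equiv 2 (H × H)).symm (χ, (c : ℂ) • D ⟨χ, hχ⟩) - ℓ xu := by
      rw [hdecomp, hxu]; abel
    rw [h1, hℓ, WithLp.equiv_symm_apply, ← WithLp.toLp_sub]
    congr 1
    rw [Prod.mk_sub_mk, Prod.mk.injEq]
    refine ⟨by simp [hχ']; rfl, ?_⟩
    rw [hχ', D.map_sub, smul_sub]
  have inner_em : ∀ A B : H × H,
      ⟪((WithLp.equiv 2 (H × H)).symm A), ((WithLp.equiv 2 (H × H)).symm B)⟫_ℂ
        = ⟪A.1, B.1⟫_ℂ + ⟪A.2, B.2⟫_ℂ := by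
    intro A B
    rw [WithLp.prod_inner_apply, WithLp.equiv_symm_apply, WithLp.ofLp_toLp,
      WithLp.ofLp_toLp]
  have horth : ⟪(ℓ χ' : WithLp 2 (H × H)), w⟫_ℂ = 0 :=
    (Submodule.mem_orthogonal _ _).mp hw (ℓ χ') (LinearMap.mem_range_self _ _)
  rw [hw', hℓ, inner_em] at horth
  simp only [Prod.fst, Prod.snd] at horth
  -- expand
  have hsplit : D (DS χ') = S (D χ') + (D (DS χ') - S (D χ')) := by abel
  have hre : (⟪S (χ' : H), (χ' : H)⟫_ℂ).re
      + c ^ 2 * ((⟪S (D χ'), D χ'⟫_ℂ).re + (⟪D (DS χ') - S (D χ'), D χ'⟫_ℂ).re) = 0 := by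
    have h2 : ⟪(c : ℂ) • D (DS χ'), (c : ℂ) • D χ'⟫_ℂ
        = ((c ^ 2 : ℝ) : ℂ) * (⟪S (D χ'), D χ'⟫_ℂ + ⟪D (DS χ') - S (D χ'), D χ'⟫_ℂ) := by
      rw [inner_smul_left, inner_smul_right, Complex.conj_ofReal]
      rw [← inner_add_left, ← hsplit]
      push_cast
      ring
    rw [h2] at horth
    have h3 := congrArg Complex.re horth
    rw [Complex.add_re, Complex.re_ofReal_mul] at h3
    simpa using h3
  set a := ‖(χ' : H)‖ with hadef
  set b := ‖D χ'‖ with hbdef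
  have r1 : ε * a ^ 2 ≤ (⟪S (χ' : H), (χ' : H)⟫_ℂ).re := hlow _
  have r2 : ε * b ^ 2 ≤ (⟪S (D χ'), D χ'⟫_ℂ).re := hlow _
  have r3 : |(⟪D (DS χ') - S (D χ'), D χ'⟫_ℂ).re| ≤ C * a * b := by
    calc |(⟪D (DS χ') - S (D χ'), D χ'⟫_ℂ).re| ≤ ‖⟪D (DS χ') - S (D χ'), D χ'⟫_ℂ‖ :=
          Complex.abs_re_le_norm _
      _ ≤ ‖D (DS χ') - S (D χ')‖ * ‖D χ'‖ := norm_inner_le_norm _ _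
      _ ≤ (C * ‖(χ' : H)‖) * ‖D χ'‖ := by
          have := hcomm χ'
          have hbn : (0 : ℝ) ≤ ‖D χ'‖ := norm_nonneg _
          exact mul_le_mul_of_nonneg_right this hbn
      _ = C * a * b := by rw [hadef, hbdef]
  have ha0 : 0 ≤ a := norm_nonneg _
  have hb0 : 0 ≤ b := norm_nonneg _
  have habs := abs_le.mp r3
  have e1 : ε * a ^ 2 + c ^ 2 * (ε * b ^ 2) ≤ c ^ 2 * (C * a * b) := by
    nlinarith [hre, r1, r2, habs.1, mul_pos hc hc]
  have key2 : (2 * ε - c * C) * (a ^ 2 + (c * b) ^ 2) ≤ 0 := by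
    nlinarith [e1, mul_nonneg (mul_nonneg hc.le hC) (sq_nonneg (a - c * b))]
  have hpos : 0 < 2 * ε - c * C := by linarith
  have key3 : a ^ 2 + (c * b) ^ 2 ≤ 0 := by nlinarith [key2, sq_nonneg a, sq_nonneg (c * b)]
  have ha2 : a ^ 2 ≤ 0 := by nlinarith [sq_nonneg (c * b)]
  have haz : a = 0 := by nlinarith [sq_nonneg a]
  have hχ'' : (χ' : H) = 0 := norm_eq_zero.mp haz
  have hSx : χ = S (xu : H) := by
    have h5 : ((⟨χ, hχ⟩ - DS xu : D.domain) : H) = 0 := hχ''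
    have h6 : χ - S (xu : H) = 0 := by
      simpa [hDS] using h5
    exact sub_eq_zero.mp h6
  rw [hSx, hSinv]
  exact xu.2

end Statement6Aux

open Statement6Aux in
/-- Let `D` be a densely defined self-adjoint operator on a complex Hilbert
space `H`, and `T` a bounded self-adjoint invertible operator with `T (Dom D) ⊆ Dom D` and
bounded commutator `[D, T]` on `Dom D`.  Then the maximal domain
`{ψ : T ψ ∈ Dom D}` of `DT` equals `Dom D`, and the operator `ψ ↦ D (T ψ)` with domain
`Dom D` is closed (its graph is closed in `H × H`). -/
theorem domain_DT_eq_and_closed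
    {H : Type*} [NormedAddCommGroup H] [InnerProductSpace ℂ H] [CompleteSpace H]
    (D : H →ₗ.[ℂ] H) (hdense : Dense (D.domain : Set H)) (hsa : IsSelfAdjoint D)
    (T Tinv : H →L[ℂ] H) (hTsa : IsSelfAdjoint T)
    (hTinv₁ : Tinv.comp T = ContinuousLinearMap.id ℂ H)
    (hTinv₂ : T.comp Tinv = ContinuousLinearMap.id ℂ H)
    (hTdom : ∀ x ∈ D.domain, T x ∈ D.domain)
    (hcomm : ∃ C : ℝ, 0 ≤ C ∧
      ∀ ψ : D.domain, ‖D ⟨T ψ, hTdom ψ ψ.2⟩ - T (D ψ)‖ ≤ C * ‖(ψ : H)‖) :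
    {ψ : H | T ψ ∈ D.domain} = (D.domain : Set H) ∧
      IsClosed {p : H × H | ∃ h : p.1 ∈ D.domain, p.2 = D ⟨T p.1, hTdom p.1 h⟩} := by
  classical
  obtain ⟨C, hC0, hC⟩ := hcomm
  have hleft : ∀ x : H, Tinv (T x) = x := fun x => by
    have := DFunLike.congr_fun hTinv₁ x
    simpa using this
  have hright : ∀ x : H, T (Tinv x) = x := fun x => by
    have := DFunLike.congr_fun hTinv₂ x
    simpa using this
  have hgraph := Statement6Aux.graph_closed_of_selfAdjoint hsa
  -- `Tinv` preserves the domain of `D`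
  have hTinvdom : ∀ χ ∈ D.domain, Tinv χ ∈ D.domain := by
    rcases subsingleton_or_nontrivial H with hsub | hnt
    · intro χ _
      have h0 : Tinv χ = 0 := Subsingleton.elim _ _
      rw [h0]; exact zero_mem _
    · set S : H →L[ℂ] H := T.comp T with hS
      set Sinv : H →L[ℂ] H := Tinv.comp Tinv with hSinvdef
      have hSdom : ∀ x ∈ D.domain, S x ∈ D.domain := fun x hx => hTdom _ (hTdom x hx)
      have hSinvleft : ∀ x, Sinv (S x) = x := fun x => by
        simp [hS, hSinvdef, hleft]
      have hTinvpos : 0 < ‖Tinv‖ := by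
        rw [norm_pos_iff]
        intro h0
        obtain ⟨x, hx⟩ := exists_ne (0 : H)
        apply hx
        calc x = Tinv (T x) := (hleft x).symm
          _ = 0 := by rw [h0]; simp
      set ε : ℝ := (‖Tinv‖ ^ 2)⁻¹ with hε
      have hεpos : 0 < ε := by positivity
      have hTsym := hTsa.isSymmetric
      have hlow : ∀ x : H, ε * ‖x‖ ^ 2 ≤ (⟪S x, x⟫_ℂ).re := by
        intro x
        have h1 : ⟪S x, x⟫_ℂ = ⟪T x, T x⟫_ℂ := by
          have h1' := hTsym (T x) x
          simpa [hS] using h1'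
        have h2 : (⟪S x, x⟫_ℂ).re = ‖T x‖ ^ 2 := by
          rw [h1, ← RCLike.re_to_complex]
          exact inner_self_eq_norm_sq (T x)
        have h3 : ‖x‖ ≤ ‖Tinv‖ * ‖T x‖ := by
          calc ‖x‖ = ‖Tinv (T x)‖ := by rw [hleft]
            _ ≤ ‖Tinv‖ * ‖T x‖ := Tinv.le_opNorm _
        rw [h2, hε, inv_mul_le_iff₀ (by positivity)]
        nlinarith [norm_nonneg x, norm_nonneg (T x), hTinvpos]
      set C₂ : ℝ := C * ‖T‖ + ‖T‖ * C with hC₂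
      have hC₂0 : 0 ≤ C₂ := by positivity
      have hcommS : ∀ ψ : D.domain, ‖D ⟨S ψ, hSdom ψ ψ.2⟩ - S (D ψ)‖ ≤ C₂ * ‖(ψ : H)‖ := by
        intro ψ
        set ψ' : D.domain := ⟨T ψ, hTdom ψ ψ.2⟩ with hψ'
        have he : (⟨S ψ, hSdom ψ ψ.2⟩ : D.domain) = ⟨T ψ', hTdom ψ' ψ'.2⟩ :=
          Subtype.ext (by simp [hS, hψ'])
        have hkey : D ⟨S ψ, hSdom ψ ψ.2⟩ - S (D ψ)
            = (D ⟨T ψ', hTdom ψ' ψ'.2⟩ - T (D ψ')) + T (D ψ' - T (D ψ)) := by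
          rw [he, map_sub]
          have hSD : S (D ψ) = T (T (D ψ)) := by simp [hS]
          rw [hSD]; abel
        rw [hkey]
        calc ‖(D ⟨T ψ', hTdom ψ' ψ'.2⟩ - T (D ψ')) + T (D ψ' - T (D ψ))‖
            ≤ ‖D ⟨T ψ', hTdom ψ' ψ'.2⟩ - T (D ψ')‖ + ‖T (D ψ' - T (D ψ))‖ := norm_add_le _ _
          _ ≤ C * ‖(ψ' : H)‖ + ‖T‖ * ‖D ψ' - T (D ψ)‖ := add_le_add (hC ψ') (T.le_opNorm _)
          _ ≤ C * (‖T‖ * ‖(ψ : H)‖) + ‖T‖ * (C * ‖(ψ : H)‖) := by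
              have hb1 : ‖(ψ' : H)‖ ≤ ‖T‖ * ‖(ψ : H)‖ := by
                rw [hψ']; exact T.le_opNorm _
              have hb2 : ‖D ψ' - T (D ψ)‖ ≤ C * ‖(ψ : H)‖ := hC ψ
              have hT0 : (0 : ℝ) ≤ ‖T‖ := norm_nonneg _
              nlinarith
          _ = C₂ * ‖(ψ : H)‖ := by rw [hC₂]; ring
      set c : ℝ := ε / (C₂ + 1) with hc
      have hcpos : 0 < c := by positivity
      have hcC : c * C₂ < 2 * ε := by
        have h1 : c * C₂ < ε := by
          rw [hc, div_mul_eq_mul_div, div_lt_iff₀ (by positivity)]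
          nlinarith
        linarith
      have hres := Statement6Aux.inv_mem_domain hgraph S Sinv hSinvleft hSdom
        hC₂0 hεpos hcpos hcC hlow hcommS
      intro χ hχ
      have h7 : Sinv χ ∈ D.domain := hres χ hχ
      have h8 : T (Sinv χ) = Tinv χ := by
        simp [hSinvdef, hright]
      rw [← h8]
      exact hTdom _ h7
  have hseteq : {ψ : H | T ψ ∈ D.domain} = (D.domain : Set H) := by
    ext ψ
    simp only [Set.mem_setOf_eq, SetLike.mem_coe]
    constructor
    · intro h
      have hh := hTinvdom _ h
      rwa [hleft] at hh
    · exact fun h => hTdom ψ h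
  refine ⟨hseteq, ?_⟩
  have hset2 : {p : H × H | ∃ h : p.1 ∈ D.domain, p.2 = D ⟨T p.1, hTdom p.1 h⟩}
      = (fun p : H × H => (T p.1, p.2)) ⁻¹' (D.graph : Set (H × H)) := by
    ext ⟨p1, p2⟩
    simp only [Set.mem_setOf_eq, Set.mem_preimage, SetLike.mem_coe]
    constructor
    · rintro ⟨h, hp2⟩
      rw [hp2]
      exact D.mem_graph ⟨T p1, hTdom p1 h⟩
    · intro hg
      have h1 : T p1 ∈ D.domain := D.mem_domain_of_mem_graph hg
      have h2 : p1 ∈ D.domain := by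
        have hh := hTinvdom _ h1
        rwa [hleft] at hh
      exact ⟨h2, (D.image_iff (hTdom p1 h2)).mpr hg⟩
  rw [hset2]
  exact hgraph.preimage ((T.continuous.comp continuous_fst).prodMk continuous_snd)
end

section
/- Under the stated hypotheses, the operator TDT, i.e. ψ ↦ T(D(Tψ)), with domain Dom D, is self-adjoint on H. -/
open scoped InnerProductSpace
open Filter


/-- The operator `ψ ↦ T (D (T ψ))` with domain `Dom D`, for a partially defined operator `D`
and a bounded operator `T` mapping `Dom D` into itself. -/
def sandwichPMap {H : Type*} [NormedAddCommGroup H] [InnerProductSpace ℂ H]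
    (D : H →ₗ.[ℂ] H) (T : H →L[ℂ] H)
    (hTdom : ∀ x ∈ D.domain, T x ∈ D.domain) : H →ₗ.[ℂ] H where
  domain := D.domain
  toFun :=
    { toFun := fun ψ => T (D ⟨T ψ, hTdom ψ ψ.2⟩)
      map_add' := by
        intro x y
        have h : (⟨T ↑(x + y), hTdom _ (x + y).2⟩ : D.domain)
            = ⟨T ↑x, hTdom _ x.2⟩ + ⟨T ↑y, hTdom _ y.2⟩ := by
          apply Subtype.ext
          simp [map_add]
        try dsimp only
        rw [h, D.map_add, map_add]
      map_smul' := by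
        intro c x
        have h : (⟨T ↑(c • x), hTdom _ (c • x).2⟩ : D.domain)
            = c • ⟨T ↑x, hTdom _ x.2⟩ := by
          apply Subtype.ext
          simp [map_smul]
        try dsimp only
        rw [h, D.map_smul, map_smul]
        rfl }

/-- Let `D` be a densely defined self-adjoint operator on a complex Hilbert
space `H`, and `T` a bounded self-adjoint invertible operator with `T (Dom D) ⊆ Dom D` and
bounded commutator `[D, T]` on `Dom D`.  Then the operator `TDT : ψ ↦ T (D (T ψ))` with
domain `Dom D` is self-adjoint. -/
theorem sandwichPMap_isSelfAdjoint
    {H : Type*} [NormedAddCommGroup H] [InnerProductSpace ℂ H] [CompleteSpace H]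
    (D : H →ₗ.[ℂ] H) (hdense : Dense (D.domain : Set H)) (hsa : IsSelfAdjoint D)
    (T Tinv : H →L[ℂ] H) (hTsa : IsSelfAdjoint T)
    (hTinv₁ : Tinv.comp T = ContinuousLinearMap.id ℂ H)
    (hTinv₂ : T.comp Tinv = ContinuousLinearMap.id ℂ H)
    (hTdom : ∀ x ∈ D.domain, T x ∈ D.domain)
    (hcomm : ∃ C : ℝ, 0 ≤ C ∧
      ∀ ψ : D.domain, ‖D ⟨T ψ, hTdom ψ ψ.2⟩ - T (D ψ)‖ ≤ C * ‖(ψ : H)‖) :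
    IsSelfAdjoint (sandwichPMap D T hTdom) := by
  rw [LinearPMap.isSelfAdjoint_def]
  rw [LinearPMap.isSelfAdjoint_def] at hsa
  -- identities for T, Tinv
  have hid₁ : ∀ x : H, Tinv (T x) = x := fun x => by
    simpa using ContinuousLinearMap.ext_iff.1 hTinv₁ x
  have hid₂ : ∀ x : H, T (Tinv x) = x := fun x => by
    simpa using ContinuousLinearMap.ext_iff.1 hTinv₂ x
  have hTinner : ∀ x y : H, ⟪T x, y⟫_ℂ = ⟪x, T y⟫_ℂ := fun x y => by
    conv_lhs => rw [← hTsa.adjoint_eq]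
    exact ContinuousLinearMap.adjoint_inner_left T y x
  have hTinvinner : ∀ x y : H, ⟪Tinv x, y⟫_ℂ = ⟪x, Tinv y⟫_ℂ := fun x y => by
    calc ⟪Tinv x, y⟫_ℂ = ⟪Tinv x, T (Tinv y)⟫_ℂ := by rw [hid₂]
    _ = ⟪T (Tinv x), Tinv y⟫_ℂ := (hTinner _ _).symm
    _ = ⟪x, Tinv y⟫_ℂ := by rw [hid₂]
  -- symmetry of D
  have hsym : ∀ x y : D.domain, ⟪(D x : H), (y : H)⟫_ℂ = ⟪(x : H), (D y : H)⟫_ℂ := by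
    intro x y
    have hle : D ≤ D.adjoint := le_of_eq hsa.symm
    have hx' : (x : H) ∈ D.adjoint.domain := hle.1 x.2
    have h := LinearPMap.adjoint_isFormalAdjoint hdense (⟨(x : H), hx'⟩ : D.adjoint.domain) y
    rwa [← hle.2 (x := x) (y := ⟨(x : H), hx'⟩) rfl] at h
  -- membership criterion
  have hmemD : ∀ (φ w : H), (∀ x : D.domain, ⟪w, (x : H)⟫_ℂ = ⟪φ, (D x : H)⟫_ℂ) →
      ∃ hφ : φ ∈ D.domain, D ⟨φ, hφ⟩ = w := by
    intro φ w h
    have hmem' : φ ∈ D.adjoint.domain := LinearPMap.mem_adjoint_domain_of_exists _ ⟨w, h⟩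
    have hle : D.adjoint ≤ D := le_of_eq hsa
    refine ⟨hle.1 hmem', ?_⟩
    have hval := LinearPMap.adjoint_apply_eq hdense (⟨φ, hmem'⟩ : D.adjoint.domain) h
    rw [← hval]
    exact (hle.2 (x := ⟨φ, hmem'⟩) rfl).symm
  -- bounded extension of the commutator
  obtain ⟨B, hB⟩ : ∃ B : H →L[ℂ] H, ∀ ψ : D.domain,
      B ψ = D ⟨T ψ, hTdom ψ ψ.2⟩ - T (D ψ) := by
    obtain ⟨C, hC0, hC⟩ := hcomm
    let f : D.domain →ₗ[ℂ] H :=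
      { toFun := fun ψ => D ⟨T ψ, hTdom ψ ψ.2⟩ - T (D ψ)
        map_add' := by
          intro x y
          have h : (⟨T ↑(x + y), hTdom _ (x + y).2⟩ : D.domain)
              = ⟨T ↑x, hTdom _ x.2⟩ + ⟨T ↑y, hTdom _ y.2⟩ := by
            apply Subtype.ext; simp [map_add]
          rw [h, D.map_add, D.map_add, map_add]
          abel
        map_smul' := by
          intro a x
          have h : (⟨T ↑(a • x), hTdom _ (a • x).2⟩ : D.domain)
              = a • ⟨T ↑x, hTdom _ x.2⟩ := by
            apply Subtype.ext; simp [map_smul]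
          rw [h, D.map_smul, D.map_smul, map_smul, smul_sub]
          rfl }
    let f' : D.domain →L[ℂ] H := f.mkContinuous C (fun ψ => by
      simpa [f, Submodule.coe_norm] using hC ψ)
    have hdr : DenseRange ⇑(D.domain.subtypeL) := by
      have : Set.range ⇑(D.domain.subtypeL) = (D.domain : Set H) := Subtype.range_coe
      rw [DenseRange, this]; exact hdense
    have hui : IsUniformInducing ⇑(D.domain.subtypeL) :=
      isUniformEmbedding_subtype_val.isUniformInducing
    refine ⟨f'.extend D.domain.subtypeL, fun ψ => ?_⟩
    have h := ContinuousLinearMap.extend_eq (f := f') (e := D.domain.subtypeL) hdr hui ψ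
    simpa [f', f] using h
  -- skew-symmetry of B
  have hBskew : ∀ x y : H, ⟪B x, y⟫_ℂ = -⟪x, B y⟫_ℂ := by
    have step1 : ∀ x y : D.domain, ⟪B ↑x, (y : H)⟫_ℂ = -⟪(x : H), B ↑y⟫_ℂ := by
      intro x y
      rw [hB x, hB y, inner_sub_left, inner_sub_right,
        hsym ⟨T ↑x, hTdom _ x.2⟩ y, hTinner (x : H) (D y : H),
        hTinner (D x : H) (y : H), hsym x ⟨T ↑y, hTdom _ y.2⟩]
      ring
    have step2 : ∀ (y : D.domain) (x : H), ⟪B x, (y : H)⟫_ℂ = -⟪x, B ↑y⟫_ℂ := by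
      intro y x
      have hc : IsClosed {x : H | ⟪B x, (y : H)⟫_ℂ = -⟪x, B ↑y⟫_ℂ} :=
        isClosed_eq (B.continuous.inner continuous_const)
          ((continuous_id.inner continuous_const).neg)
      exact hc.closure_subset_iff.2 (fun z hz => step1 ⟨z, hz⟩ y) (hdense x)
    intro x y
    have hc : IsClosed {y : H | ⟪B x, y⟫_ℂ = -⟪x, B y⟫_ℂ} :=
      isClosed_eq (continuous_const.inner continuous_id)
        ((continuous_const.inner B.continuous).neg)
    exact hc.closure_subset_iff.2 (fun z hz => step2 ⟨z, hz⟩ x) (hdense y)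
  -- setup constants
  set μ : ℝ := ‖B‖ * ‖Tinv‖ + 1 with hμdef
  have hμpos : 0 < μ := by positivity
  set c : ℂ := (μ : ℂ) * Complex.I with hcdef
  have hconj : (starRingEnd ℂ) c = -c := by
    simp [hcdef, Complex.ext_iff]
  -- lower bound
  have hlow : ∀ ψ : D.domain,
      μ * ‖(ψ : H)‖ ≤ ‖(D ψ : H) + c • (ψ : H)‖ ∧
      ‖(D ψ : H)‖ ≤ ‖(D ψ : H) + c • (ψ : H)‖ := by
    intro ψ
    have him : (⟪(D ψ : H), (ψ : H)⟫_ℂ).im = 0 := by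
      have h1 : (starRingEnd ℂ) ⟪(D ψ : H), (ψ : H)⟫_ℂ = ⟪(D ψ : H), (ψ : H)⟫_ℂ := by
        rw [inner_conj_symm]; exact (hsym ψ ψ).symm
      rwa [Complex.conj_eq_iff_im] at h1
    have hre : RCLike.re ⟪(D ψ : H), c • (ψ : H)⟫_ℂ = 0 := by
      rw [inner_smul_right]
      simp [hcdef, Complex.mul_re, Complex.mul_im, him]
    have hnc : ‖c • (ψ : H)‖ = μ * ‖(ψ : H)‖ := by
      rw [norm_smul]
      simp [hcdef, abs_of_pos hμpos, Complex.norm_def, Complex.normSq_mk]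
    have hsq : ‖(D ψ : H) + c • (ψ : H)‖ ^ 2
        = ‖(D ψ : H)‖ ^ 2 + (μ * ‖(ψ : H)‖) ^ 2 := by
      rw [norm_add_sq (𝕜 := ℂ), hre, hnc]; ring
    constructor
    · have h1 : (μ * ‖(ψ : H)‖) ^ 2 ≤ ‖(D ψ : H) + c • (ψ : H)‖ ^ 2 := by
        rw [hsq]; nlinarith [sq_nonneg ‖(D ψ : H)‖]
      have h2 := Real.sqrt_le_sqrt h1
      rwa [Real.sqrt_sq (by positivity), Real.sqrt_sq (norm_nonneg _)] at h2
    · have h1 : ‖(D ψ : H)‖ ^ 2 ≤ ‖(D ψ : H) + c • (ψ : H)‖ ^ 2 := by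
        rw [hsq]; nlinarith [sq_nonneg (μ * ‖(ψ : H)‖)]
      have h2 := Real.sqrt_le_sqrt h1
      rwa [Real.sqrt_sq (norm_nonneg _), Real.sqrt_sq (norm_nonneg _)] at h2
  -- surjectivity of D + i μ
  have hsurj : ∀ z : H, ∃ ψ : D.domain, (D ψ : H) + c • (ψ : H) = z := by
    set L : D.domain →ₗ[ℂ] H := D.toFun + c • D.domain.subtype with hLdef
    have hL : ∀ ψ : D.domain, L ψ = (D ψ : H) + c • (ψ : H) := fun ψ => rfl
    set R : Submodule ℂ H := LinearMap.range L with hRdef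
    have hRc : IsClosed (R : Set H) := by
      rw [← isSeqClosed_iff_isClosed]
      intro u z hu hz
      choose ψ hψ using fun n => LinearMap.mem_range.1 (hu n)
      have hcu : CauchySeq u := hz.cauchySeq
      have key : ∀ m n : ℕ, μ * ‖(ψ m : H) - (ψ n : H)‖ ≤ dist (u m) (u n) ∧
          ‖(D (ψ m) : H) - (D (ψ n) : H)‖ ≤ dist (u m) (u n) := by
        intro m n
        have he : (D (ψ m - ψ n) : H) + c • ((ψ m - ψ n : D.domain) : H) = u m - u n := by
          rw [← hL, map_sub, hψ, hψ]
        have h1 := (hlow (ψ m - ψ n)).1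
        have h2 := (hlow (ψ m - ψ n)).2
        rw [he] at h1 h2
        rw [dist_eq_norm]
        constructor
        · simpa [D.map_sub] using h1
        · simpa [D.map_sub] using h2
      have hφc : CauchySeq (fun n => ((ψ n : H))) := by
        rw [Metric.cauchySeq_iff] at hcu ⊢
        intro ε hε
        obtain ⟨N, hN⟩ := hcu (μ * ε) (by positivity)
        refine ⟨N, fun m hm n hn => ?_⟩
        have h1 := (key m n).1
        have h2 := hN m hm n hn
        rw [dist_eq_norm]
        nlinarith
      have hDc : CauchySeq (fun n => ((D (ψ n) : H))) := by
        rw [Metric.cauchySeq_iff] at hcu ⊢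
        intro ε hε
        obtain ⟨N, hN⟩ := hcu ε hε
        refine ⟨N, fun m hm n hn => ?_⟩
        have h1 := (key m n).2
        have h2 := hN m hm n hn
        rw [dist_eq_norm]
        linarith
      obtain ⟨φ, hφ⟩ := cauchySeq_tendsto_of_complete hφc
      obtain ⟨η, hη⟩ := cauchySeq_tendsto_of_complete hDc
      obtain ⟨hm, hDφ⟩ : ∃ hm : φ ∈ D.domain, D ⟨φ, hm⟩ = η := by
        apply hmemD
        intro x
        have t1 : Tendsto (fun n => ⟪(D (ψ n) : H), (x : H)⟫_ℂ) atTop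
            (nhds ⟪η, (x : H)⟫_ℂ) := hη.inner tendsto_const_nhds
        have t2 : Tendsto (fun n => ⟪((ψ n : H)), (D x : H)⟫_ℂ) atTop
            (nhds ⟪φ, (D x : H)⟫_ℂ) := hφ.inner tendsto_const_nhds
        have heq : (fun n => ⟪(D (ψ n) : H), (x : H)⟫_ℂ)
            = fun n => ⟪((ψ n : H)), (D x : H)⟫_ℂ := funext fun n => hsym (ψ n) x
        exact tendsto_nhds_unique (heq ▸ t1) t2
      refine LinearMap.mem_range.2 ⟨⟨φ, hm⟩, ?_⟩
      rw [hL]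
      dsimp only
      rw [hDφ]
      have t3 : Tendsto (fun n => (D (ψ n) : H) + c • ((ψ n : H))) atTop
          (nhds (η + c • φ)) := hη.add (hφ.const_smul c)
      have hu' : (fun n => (D (ψ n) : H) + c • ((ψ n : H))) = u :=
        funext fun n => by rw [← hL, hψ]
      exact tendsto_nhds_unique (hu' ▸ t3) hz
    have hperp : Rᗮ = ⊥ := by
      rw [Submodule.eq_bot_iff]
      intro z hz
      have h0 : ∀ ψ : D.domain, ⟪(D ψ : H) + c • (ψ : H), z⟫_ℂ = 0 := fun ψ =>
        (Submodule.mem_orthogonal _ _).1 hz _ (LinearMap.mem_range.2 ⟨ψ, hL ψ⟩)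
      have h1 : ∀ ψ : D.domain, ⟪c • z, (ψ : H)⟫_ℂ = ⟪z, (D ψ : H)⟫_ℂ := by
        intro ψ
        have h := h0 ψ
        rw [inner_add_left, inner_smul_left] at h
        have h2 : ⟪(D ψ : H), z⟫_ℂ = -((starRingEnd ℂ) c * ⟪(ψ : H), z⟫_ℂ) :=
          eq_neg_of_add_eq_zero_left h
        have h3 : ⟪z, (D ψ : H)⟫_ℂ = -(c * ⟪z, (ψ : H)⟫_ℂ) := by
          have h4 := congrArg (starRingEnd ℂ) h2
          simpa [map_mul, inner_conj_symm] using h4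
        rw [inner_smul_left, hconj, h3]
        ring
      obtain ⟨hzmem, hDz⟩ := hmemD z (c • z) h1
      have h3 := hsym ⟨z, hzmem⟩ ⟨z, hzmem⟩
      rw [hDz] at h3
      rw [inner_smul_left, inner_smul_right, hconj] at h3
      have h4 : ⟪z, z⟫_ℂ = 0 := by
        have h5 : (2 * c) * ⟪z, z⟫_ℂ = 0 := by linear_combination -h3
        have hc0 : (2 : ℂ) * c ≠ 0 := by
          simp [hcdef, Complex.ext_iff, hμpos.ne']
        exact (mul_eq_zero.1 h5).resolve_left hc0
      exact inner_self_eq_zero.1 h4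
    haveI : CompleteSpace R := hRc.completeSpace_coe
    have hRtop : R = ⊤ := by
      calc R = Rᗮᗮ := (Submodule.orthogonal_orthogonal R).symm
      _ = (⊥ : Submodule ℂ H)ᗮ := by rw [hperp]
      _ = ⊤ := Submodule.bot_orthogonal_eq_top
    intro z
    have hzR : z ∈ R := by rw [hRtop]; trivial
    obtain ⟨ψ, hψ⟩ := LinearMap.mem_range.1 hzR
    exact ⟨ψ, by rw [← hψ, hL]⟩
  -- Tinv preserves the domain
  have hTinvdom : ∀ y : H, y ∈ D.domain → Tinv y ∈ D.domain := by
    intro y hy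
    obtain ⟨z, hz⟩ := hsurj (Tinv ((D ⟨y, hy⟩ : H) + c • y) - Tinv (B (Tinv y)))
    have hTz : T (z : H) ∈ D.domain := hTdom _ z.2
    have hu : (T (z : H) - y) ∈ D.domain := sub_mem hTz hy
    have hBz : (D ⟨T (z : H), hTz⟩ : H) = T (D z) + B (z : H) := by
      rw [hB z]; abel
    have hDu : (D ⟨T (z : H) - y, hu⟩ : H) = (D ⟨T (z : H), hTz⟩ : H) - (D ⟨y, hy⟩ : H) := by
      have hsub : (⟨T (z : H) - y, hu⟩ : D.domain) = ⟨T (z : H), hTz⟩ - ⟨y, hy⟩ := by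
        apply Subtype.ext; simp
      rw [hsub, D.map_sub]
    have main : (D ⟨T (z : H) - y, hu⟩ : H) + c • (T (z : H) - y)
        = B (Tinv (T (z : H) - y)) := by
      have hTz' : T ((D z : H) + c • (z : H))
          = (D ⟨y, hy⟩ : H) + c • y - B (Tinv y) := by
        rw [hz, map_sub, hid₂, hid₂]
      have h6 : T (D z) + c • T ((z : H))
          = (D ⟨y, hy⟩ : H) + c • y - B (Tinv y) := by
        rw [← hTz']; rw [map_add, map_smul]
      have h7 : T (D z) = (D ⟨y, hy⟩ : H) + c • y - B (Tinv y) - c • T ((z : H)) :=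
        eq_sub_of_add_eq h6
      have h5 : Tinv (T ((z : H)) - y) = (z : H) - Tinv y := by rw [map_sub, hid₁]
      rw [hDu, hBz, h5, map_sub, h7, smul_sub]
      abel
    have hb1 := (hlow ⟨T (z : H) - y, hu⟩).1
    rw [main] at hb1
    have hb2 : ‖B (Tinv (T (z : H) - y))‖ ≤ (‖B‖ * ‖Tinv‖) * ‖T (z : H) - y‖ := by
      calc ‖B (Tinv (T (z : H) - y))‖ ≤ ‖B‖ * ‖Tinv (T (z : H) - y)‖ := B.le_opNorm _
      _ ≤ ‖B‖ * (‖Tinv‖ * ‖T (z : H) - y‖) := by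
        gcongr; exact Tinv.le_opNorm _
      _ = _ := by ring
    have hzero : T (z : H) = y := by
      have h8 : μ * ‖T (z : H) - y‖ ≤ (‖B‖ * ‖Tinv‖) * ‖T (z : H) - y‖ := hb1.trans hb2
      have h9 : ‖T (z : H) - y‖ ≤ 0 := by
        rw [hμdef] at h8; nlinarith [norm_nonneg (T (z : H) - y)]
      have := norm_le_zero_iff.1 h9
      rwa [sub_eq_zero] at this
    have : Tinv y = (z : H) := by rw [← hzero, hid₁]
    rw [this]; exact z.2
  -- final adjoint computation
  set S := sandwichPMap D T hTdom with hSdef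
  have hSdom : S.domain = D.domain := rfl
  have hSapp : ∀ x : D.domain, S ⟨(x : H), x.2⟩ = T (D ⟨T (x : H), hTdom _ x.2⟩) :=
    fun x => rfl
  have hSsym : S.IsFormalAdjoint S := by
    intro x y
    have hx : (x : H) ∈ D.domain := x.2
    have hy : (y : H) ∈ D.domain := y.2
    calc ⟪(S x : H), (y : H)⟫_ℂ
        = ⟪T (D ⟨T (x : H), hTdom _ hx⟩ : H), (y : H)⟫_ℂ := rfl
    _ = ⟪(D ⟨T (x : H), hTdom _ hx⟩ : H), T (y : H)⟫_ℂ := hTinner _ _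
    _ = ⟪T (x : H), (D ⟨T (y : H), hTdom _ hy⟩ : H)⟫_ℂ :=
        hsym ⟨T (x : H), hTdom _ hx⟩ ⟨T (y : H), hTdom _ hy⟩
    _ = ⟪(x : H), T (D ⟨T (y : H), hTdom _ hy⟩ : H)⟫_ℂ := hTinner _ _
    _ = ⟪(x : H), (S y : H)⟫_ℂ := rfl
  have hle : S ≤ S.adjoint := LinearPMap.IsFormalAdjoint.le_adjoint (T := S) hdense hSsym
  have hge : S.adjoint ≤ S := by
    have haf := LinearPMap.adjoint_isFormalAdjoint (T := S) hdense
    have hkey : ∀ φ : S.adjoint.domain,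
        ∃ hm : T (φ : H) ∈ D.domain, D ⟨T (φ : H), hm⟩ = Tinv (S.adjoint φ) := by
      intro φ
      apply hmemD
      intro χ
      have hχ' : Tinv (χ : H) ∈ D.domain := hTinvdom _ χ.2
      have hx : (⟨Tinv (χ : H), hχ'⟩ : S.domain) = ⟨Tinv (χ : H), hχ'⟩ := rfl
      have h1 := haf φ (⟨Tinv (χ : H), hχ'⟩ : S.domain)
      have h2 : (S ⟨Tinv (χ : H), hχ'⟩ : H) = T (D χ) := by
        have hTT : (⟨T (Tinv (χ : H)), hTdom _ hχ'⟩ : D.domain) = χ := by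
          apply Subtype.ext; simp [hid₂]
        calc (S ⟨Tinv (χ : H), hχ'⟩ : H)
            = T (D ⟨T (Tinv (χ : H)), hTdom _ hχ'⟩) := rfl
        _ = T (D χ) := by rw [hTT]
      calc ⟪Tinv (S.adjoint φ), (χ : H)⟫_ℂ
          = ⟪(S.adjoint φ : H), Tinv (χ : H)⟫_ℂ := hTinvinner _ _
      _ = ⟪(φ : H), (S ⟨Tinv (χ : H), hχ'⟩ : H)⟫_ℂ := h1
      _ = ⟪(φ : H), T (D χ)⟫_ℂ := by rw [h2]
      _ = ⟪T (φ : H), (D χ : H)⟫_ℂ := (hTinner _ _).symm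
    constructor
    · intro φ hφ
      obtain ⟨hm, -⟩ := hkey ⟨φ, hφ⟩
      have : Tinv (T φ) ∈ D.domain := hTinvdom _ hm
      rwa [hid₁] at this
    · intro x y hxy
      obtain ⟨hm, hDx⟩ := hkey x
      have hy2 : T (y : H) ∈ D.domain := hTdom _ y.2
      have hyx : (⟨T (y : H), hTdom _ y.2⟩ : D.domain) = ⟨T (x : H), hm⟩ := by
        apply Subtype.ext; simp [hxy]
      calc S.adjoint x = T (Tinv (S.adjoint x)) := (hid₂ _).symm
      _ = T (D ⟨T (x : H), hm⟩) := by rw [hDx]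
      _ = T (D ⟨T (y : H), hTdom _ y.2⟩) := by rw [hyx]
      _ = S y := rfl
  exact le_antisymm hge hle
end

section
/- Under the stated hypotheses, the inverse T⁻¹ maps Dom D onto Dom D, and the operator T⁻¹DT⁻¹, i.e. ψ ↦ T⁻¹(D(T⁻¹ψ)), with domain Dom D, is well-defined and self-adjoint on H. -/
open scoped InnerProductSpace ComplexConjugate

namespace SandwichAux

variable {H : Type*} [NormedAddCommGroup H] [InnerProductSpace ℂ H] [CompleteSpace H]


variable {H : Type*} [NormedAddCommGroup H] [InnerProductSpace ℂ H] [CompleteSpace H]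

omit [CompleteSpace H] in
lemma pmap_eq_of_eq {S T : H →ₗ.[ℂ] H} (h : S = T) {x : H} (hx : x ∈ S.domain)
    (hx' : x ∈ T.domain) : S ⟨x, hx⟩ = T ⟨x, hx'⟩ := by subst h; rfl

lemma symmetric {D : H →ₗ.[ℂ] H} (hdense : Dense (D.domain : Set H))
    (hsa : IsSelfAdjoint D) (x y : D.domain) :
    ⟪(D x : H), (y : H)⟫_ℂ = ⟪(x : H), (D y : H)⟫_ℂ := by
  have hsa' : D.adjoint = D := hsa
  have h := LinearPMap.adjoint_isFormalAdjoint (T := D) hdense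
  rw [hsa'] at h
  exact h x y

lemma norm_L_sq {D : H →ₗ.[ℂ] H} (hdense : Dense (D.domain : Set H))
    (hsa : IsSelfAdjoint D) (lam : ℝ) (ψ : D.domain) :
    ‖(D ψ : H) + ((lam : ℂ) * Complex.I) • (ψ : H)‖ ^ 2
      = ‖(D ψ : H)‖ ^ 2 + lam ^ 2 * ‖(ψ : H)‖ ^ 2 := by
  have him : (⟪(D ψ : H), (ψ : H)⟫_ℂ).im = 0 := by
    have h1 : ⟪(D ψ : H), (ψ : H)⟫_ℂ = ⟪(ψ : H), (D ψ : H)⟫_ℂ := symmetric hdense hsa ψ ψ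
    have h2 : ⟪(ψ : H), (D ψ : H)⟫_ℂ = conj ⟪(D ψ : H), (ψ : H)⟫_ℂ :=
      (inner_conj_symm _ _).symm
    have h3 := congrArg Complex.im (h1.trans h2)
    rw [Complex.conj_im] at h3
    linarith
  have hre : RCLike.re ⟪(D ψ : H), ((lam : ℂ) * Complex.I) • (ψ : H)⟫_ℂ = 0 := by
    rw [inner_smul_right]
    simp [Complex.mul_re, Complex.mul_im, him]
  have hn : ‖((lam : ℂ) * Complex.I)‖ = |lam| := by simp
  rw [norm_add_sq (𝕜 := ℂ), hre, norm_smul, hn, mul_pow, sq_abs]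
  ring

lemma lam_norm_le {D : H →ₗ.[ℂ] H} (hdense : Dense (D.domain : Set H))
    (hsa : IsSelfAdjoint D) {lam : ℝ} (ψ : D.domain) :
    lam * ‖(ψ : H)‖ ≤ ‖(D ψ : H) + ((lam : ℂ) * Complex.I) • (ψ : H)‖ := by
  have h := norm_L_sq hdense hsa lam ψ
  nlinarith [norm_nonneg ((D ψ : H) + ((lam : ℂ) * Complex.I) • (ψ : H)),
    norm_nonneg (ψ : H), norm_nonneg (D ψ : H)]

lemma surj {D : H →ₗ.[ℂ] H} (hdense : Dense (D.domain : Set H)) (hsa : IsSelfAdjoint D)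
    {lam : ℝ} (hlam : 0 < lam) (v : H) :
    ∃ ψ : D.domain, (D ψ : H) + ((lam : ℂ) * Complex.I) • (ψ : H) = v := by
  have hsa' : D.adjoint = D := hsa
  set μ : ℂ := (lam : ℂ) * Complex.I with hμ
  have hμconj : conj μ = -μ := by simp [hμ]
  have hμne : μ ≠ 0 := by
    simp [hμ, Complex.ext_iff]
    exact ne_of_gt hlam
  -- the range of `D + i λ`
  set L : D.domain →ₗ[ℂ] H := D.toFun + μ • D.domain.subtype with hLdef
  have hL : ∀ ψ : D.domain, L ψ = (D ψ : H) + μ • (ψ : H) := fun ψ => rfl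
  set M : Submodule ℂ H := LinearMap.range L with hM
  have hlow : ∀ ψ : D.domain, lam * ‖(ψ : H)‖ ≤ ‖L ψ‖ := by
    intro ψ; rw [hL]; exact lam_norm_le hdense hsa ψ
  -- `M` is dense
  have horth : Mᗮ = ⊥ := by
    rw [Submodule.eq_bot_iff]
    intro u hu
    have h0 : ∀ ψ : D.domain, ⟪L ψ, u⟫_ℂ = 0 := fun ψ =>
      (Submodule.mem_orthogonal M u).mp hu (L ψ) (LinearMap.mem_range_self L ψ)
    have hDu : ∀ ψ : D.domain, ⟪μ • u, (ψ : H)⟫_ℂ = ⟪u, (D ψ : H)⟫_ℂ := by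
      intro ψ
      have h1 : ⟪(D ψ : H), u⟫_ℂ + conj μ * ⟪(ψ : H), u⟫_ℂ = 0 := by
        have := h0 ψ
        rwa [hL, inner_add_left, inner_smul_left] at this
      have h3 : ⟪(D ψ : H), u⟫_ℂ = μ * ⟪(ψ : H), u⟫_ℂ := by
        rw [hμconj] at h1; linear_combination h1
      calc ⟪μ • u, (ψ : H)⟫_ℂ
          = conj μ * ⟪u, (ψ : H)⟫_ℂ := inner_smul_left _ _ _
        _ = conj μ * conj ⟪(ψ : H), u⟫_ℂ := by rw [inner_conj_symm]
        _ = conj (μ * ⟪(ψ : H), u⟫_ℂ) := (map_mul (starRingEnd ℂ) _ _).symm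
        _ = conj ⟪(D ψ : H), u⟫_ℂ := by rw [← h3]
        _ = ⟪u, (D ψ : H)⟫_ℂ := inner_conj_symm _ _
    have hadj : u ∈ D.adjoint.domain :=
      LinearPMap.mem_adjoint_domain_of_exists u ⟨μ • u, hDu⟩
    have hmem : u ∈ D.domain := by rw [← hsa']; exact hadj
    have hval : D ⟨u, hmem⟩ = μ • u := by
      rw [← pmap_eq_of_eq hsa' hadj hmem]
      exact LinearPMap.adjoint_apply_eq hdense ⟨u, hadj⟩ hDu
    have hsym := symmetric hdense hsa ⟨u, hmem⟩ ⟨u, hmem⟩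
    rw [hval] at hsym
    rw [inner_smul_left, inner_smul_right, hμconj] at hsym
    have hinner : ⟪u, u⟫_ℂ = 0 := by
      have h2 : (2 * μ) * ⟪u, u⟫_ℂ = 0 := by linear_combination -hsym
      rcases mul_eq_zero.mp h2 with h | h
      · exact absurd h (by simpa using hμne)
      · exact h
    exact inner_self_eq_zero.mp hinner
  have htop : M.topologicalClosure = ⊤ := Submodule.topologicalClosure_eq_top_iff.mpr horth
  -- `v` is a limit of elements of `M`
  have hv : v ∈ closure (M : Set H) := by
    have : v ∈ M.topologicalClosure := by rw [htop]; trivial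
    exact this
  obtain ⟨g, hgM, hgv⟩ := mem_closure_iff_seq_limit.mp hv
  choose φ hφ using fun n => (LinearMap.mem_range.mp (hgM n))
  -- the preimages form a Cauchy sequence
  have hgc : CauchySeq g := hgv.cauchySeq
  have hφc : CauchySeq (fun n => (φ n : H)) := by
    rw [Metric.cauchySeq_iff]
    intro ε hε
    obtain ⟨N, hN⟩ := Metric.cauchySeq_iff.mp hgc (lam * ε) (by positivity)
    refine ⟨N, fun m hm n hn => ?_⟩
    have h1 : lam * ‖((φ m - φ n : D.domain) : H)‖ ≤ ‖L (φ m - φ n)‖ := hlow _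
    rw [map_sub, hφ, hφ] at h1
    have h2 : dist (g m) (g n) < lam * ε := hN m hm n hn
    rw [dist_eq_norm] at h2 ⊢
    have h3 : ((φ m - φ n : D.domain) : H) = (φ m : H) - (φ n : H) := rfl
    rw [h3] at h1
    nlinarith
  obtain ⟨ψl, hψl⟩ := cauchySeq_tendsto_of_complete hφc
  have hDφ : Filter.Tendsto (fun n => (D (φ n) : H)) Filter.atTop (nhds (v - μ • ψl)) := by
    have heq : ∀ n, (D (φ n) : H) = g n - μ • (φ n : H) := by
      intro n
      have := hφ n
      rw [hL] at this
      rw [← this]; abel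
    simp_rw [heq]
    exact hgv.sub (hψl.const_smul μ)
  set ζ : H := v - μ • ψl with hζ
  have hkey : ∀ x : D.domain, ⟪ζ, (x : H)⟫_ℂ = ⟪ψl, (D x : H)⟫_ℂ := by
    intro x
    have t1 : Filter.Tendsto (fun n => ⟪(D (φ n) : H), (x : H)⟫_ℂ) Filter.atTop
        (nhds ⟪ζ, (x : H)⟫_ℂ) := hDφ.inner tendsto_const_nhds
    have t2 : Filter.Tendsto (fun n => ⟪(D (φ n) : H), (x : H)⟫_ℂ) Filter.atTop
        (nhds ⟪ψl, (D x : H)⟫_ℂ) := by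
      have heq : ∀ n, ⟪(D (φ n) : H), (x : H)⟫_ℂ = ⟪((φ n : H)), (D x : H)⟫_ℂ :=
        fun n => symmetric hdense hsa (φ n) x
      simp_rw [heq]
      exact (hψl.inner tendsto_const_nhds)
    exact tendsto_nhds_unique t1 t2
  have hadj : ψl ∈ D.adjoint.domain :=
    LinearPMap.mem_adjoint_domain_of_exists ψl ⟨ζ, hkey⟩
  have hmem : ψl ∈ D.domain := by rw [← hsa']; exact hadj
  have hval : D ⟨ψl, hmem⟩ = ζ := by
    rw [← pmap_eq_of_eq hsa' hadj hmem]
    exact LinearPMap.adjoint_apply_eq hdense ⟨ψl, hadj⟩ hkey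
  exact ⟨⟨ψl, hmem⟩, by rw [hval, hζ]; abel⟩

lemma tinv_mem {D : H →ₗ.[ℂ] H} (hdense : Dense (D.domain : Set H)) (hsa : IsSelfAdjoint D)
    (T Tinv : H →L[ℂ] H)
    (hTinv₁ : Tinv.comp T = ContinuousLinearMap.id ℂ H)
    (hTinv₂ : T.comp Tinv = ContinuousLinearMap.id ℂ H)
    (hTdom : ∀ x ∈ D.domain, T x ∈ D.domain)
    (hcomm : ∃ C : ℝ, 0 ≤ C ∧
      ∀ ψ : D.domain, ‖D ⟨T ψ, hTdom ψ ψ.2⟩ - T (D ψ)‖ ≤ C * ‖(ψ : H)‖) :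
    ∀ x ∈ D.domain, Tinv x ∈ D.domain := by
  obtain ⟨C, hC0, hC⟩ := hcomm
  have hTT : ∀ x : H, T (Tinv x) = x := fun x => ContinuousLinearMap.ext_iff.mp hTinv₂ x
  have hTinvT : ∀ x : H, Tinv (T x) = x := fun x => ContinuousLinearMap.ext_iff.mp hTinv₁ x
  set lam : ℝ := C * ‖Tinv‖ + 1 with hlam_def
  have hlam : 0 < lam := by positivity
  set μ : ℂ := (lam : ℂ) * Complex.I with hμ
  choose R hR using fun v => surj hdense hsa hlam v
  -- lower bound and injectivity
  have hlow : ∀ ψ : D.domain, lam * ‖(ψ : H)‖ ≤ ‖(D ψ : H) + μ • (ψ : H)‖ :=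
    fun ψ => lam_norm_le hdense hsa ψ
  have hLsub : ∀ x y : D.domain,
      (D (x - y) : H) + μ • ((x - y : D.domain) : H)
        = ((D x : H) + μ • (x : H)) - ((D y : H) + μ • (y : H)) := by
    intro x y
    rw [D.map_sub]
    have : ((x - y : D.domain) : H) = (x : H) - (y : H) := rfl
    rw [this, smul_sub]
    abel
  have hinj : ∀ x y : D.domain,
      (D x : H) + μ • (x : H) = (D y : H) + μ • (y : H) → x = y := by
    intro x y hxy
    have h1 := hlow (x - y)
    rw [hLsub, hxy, sub_self, norm_zero] at h1
    have h2 : ‖((x - y : D.domain) : H)‖ = 0 := by nlinarith [norm_nonneg ((x - y : D.domain) : H)]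
    have h3 : ((x - y : D.domain) : H) = 0 := norm_eq_zero.mp h2
    have h5 : ((x - y : D.domain) : H) = (x : H) - (y : H) := rfl
    rw [h5] at h3
    exact Subtype.ext (sub_eq_zero.mp h3)
  -- commutator as a function
  set Bf : D.domain → H := fun x => (D ⟨T x, hTdom _ x.2⟩ : H) - T (D x) with hBf
  have hBf_sub : ∀ x y : D.domain, Bf x - Bf y = Bf (x - y) := by
    intro x y
    have h : (⟨T ↑(x - y), hTdom _ (x - y).2⟩ : D.domain)
        = ⟨T ↑x, hTdom _ x.2⟩ - ⟨T ↑y, hTdom _ y.2⟩ := by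
      apply Subtype.ext
      simp [map_sub]
    simp only [hBf, h, D.map_sub, map_sub]
    abel
  have hBf_norm : ∀ x : D.domain, ‖Bf x‖ ≤ C * ‖(x : H)‖ := fun x => hC x
  -- R is Lipschitz with constant 1/lam
  have hRdiff : ∀ u w : H, ‖(R u : H) - (R w : H)‖ ≤ (1 / lam) * ‖u - w‖ := by
    intro u w
    have h1 := hlow (R u - R w)
    rw [hLsub, hR, hR] at h1
    have h2 : ((R u - R w : D.domain) : H) = (R u : H) - (R w : H) := rfl
    rw [h2] at h1
    rw [div_mul_eq_mul_div, le_div_iff₀ hlam]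
    linarith
  intro ψ₀ hψ₀
  set v : H := (D ⟨ψ₀, hψ₀⟩ : H) + μ • ψ₀ with hv
  set Φ : H → H := fun u => Tinv v - Tinv (Bf (R u)) with hΦ
  set K : NNReal := Real.toNNReal (C * ‖Tinv‖ / lam) with hK
  have hKval : (K : ℝ) = C * ‖Tinv‖ / lam :=
    Real.coe_toNNReal _ (by positivity)
  have hlip : LipschitzWith K Φ := by
    apply LipschitzWith.of_dist_le_mul
    intro u w
    rw [dist_eq_norm, dist_eq_norm, hKval]
    have h1 : Φ u - Φ w = Tinv (Bf (R w) - Bf (R u)) := by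
      rw [map_sub]
      simp only [hΦ]
      abel
    rw [h1, hBf_sub]
    calc ‖Tinv (Bf (R w - R u))‖ ≤ ‖Tinv‖ * ‖Bf (R w - R u)‖ := Tinv.le_opNorm _
      _ ≤ ‖Tinv‖ * (C * ‖((R w - R u : D.domain) : H)‖) := by
          have := hBf_norm (R w - R u)
          exact mul_le_mul_of_nonneg_left this (norm_nonneg _)
      _ ≤ ‖Tinv‖ * (C * ((1 / lam) * ‖w - u‖)) := by
          have h2 : ((R w - R u : D.domain) : H) = (R w : H) - (R u : H) := rfl
          rw [h2]
          exact mul_le_mul_of_nonneg_left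
            (mul_le_mul_of_nonneg_left (hRdiff w u) hC0) (norm_nonneg _)
      _ = C * ‖Tinv‖ / lam * ‖u - w‖ := by rw [norm_sub_rev]; ring
  have hK1 : K < 1 := by
    rw [← NNReal.coe_lt_coe, hKval, NNReal.coe_one, div_lt_one hlam, hlam_def]
    linarith
  have : Nonempty H := ⟨0⟩
  have hcontr : ContractingWith K Φ := ⟨hK1, hlip⟩
  set u : H := ContractingWith.fixedPoint Φ hcontr with hu
  have hfix : Φ u = u := hcontr.fixedPoint_isFixedPt
  have hTu : T u = v - Bf (R u) := by
    conv_lhs => rw [← hfix]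
    simp only [hΦ]
    rw [map_sub, hTT, hTT]
  -- T (R u) is a preimage of v under L
  have hmemTRu : T (R u : H) ∈ D.domain := hTdom _ (R u).2
  have hLTRu : (D ⟨T (R u : H), hmemTRu⟩ : H) + μ • (T (R u : H)) = v := by
    have h1 : (D ⟨T (R u : H), hmemTRu⟩ : H) = T (D (R u)) + Bf (R u) := by
      simp only [hBf]; abel
    rw [h1]
    have h2 : T (D (R u)) + μ • T ((R u : H)) = T ((D (R u) : H) + μ • ((R u : H))) := by
      rw [map_add, map_smul]
    rw [add_comm (T (D (R u))) (Bf (R u)), add_assoc, h2, hR]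
    rw [hTu]
    abel
  have heq : (⟨T (R u : H), hmemTRu⟩ : D.domain) = ⟨ψ₀, hψ₀⟩ := by
    apply hinj
    rw [hLTRu]
  have hTRu : T (R u : H) = ψ₀ := congrArg Subtype.val heq
  have : Tinv ψ₀ = (R u : H) := by rw [← hTRu, hTinvT]
  rw [this]
  exact (R u).2


end SandwichAux


/-- Let `D` be a densely defined self-adjoint operator on a complex Hilbert
space `H`, and `T` a bounded self-adjoint invertible operator with `T (Dom D) ⊆ Dom D` and
bounded commutator `[D, T]` on `Dom D`.  Then `T⁻¹` maps `Dom D` onto `Dom D`, and the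
operator `T⁻¹DT⁻¹ : ψ ↦ T⁻¹ (D (T⁻¹ ψ))` with domain `Dom D` is well-defined and
self-adjoint. -/
theorem sandwichPMap_inv_isSelfAdjoint
    {H : Type*} [NormedAddCommGroup H] [InnerProductSpace ℂ H] [CompleteSpace H]
    (D : H →ₗ.[ℂ] H) (hdense : Dense (D.domain : Set H)) (hsa : IsSelfAdjoint D)
    (T Tinv : H →L[ℂ] H) (hTsa : IsSelfAdjoint T)
    (hTinv₁ : Tinv.comp T = ContinuousLinearMap.id ℂ H)
    (hTinv₂ : T.comp Tinv = ContinuousLinearMap.id ℂ H)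
    (hTdom : ∀ x ∈ D.domain, T x ∈ D.domain)
    (hcomm : ∃ C : ℝ, 0 ≤ C ∧
      ∀ ψ : D.domain, ‖D ⟨T ψ, hTdom ψ ψ.2⟩ - T (D ψ)‖ ≤ C * ‖(ψ : H)‖) :
    Tinv '' (D.domain : Set H) = (D.domain : Set H) ∧
      ∃ hTinvdom : ∀ x ∈ D.domain, Tinv x ∈ D.domain,
        IsSelfAdjoint (sandwichPMap D Tinv hTinvdom) := by
  have hTT : ∀ x : H, T (Tinv x) = x := fun x => ContinuousLinearMap.ext_iff.mp hTinv₂ x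
  have hTinvT : ∀ x : H, Tinv (T x) = x := fun x => ContinuousLinearMap.ext_iff.mp hTinv₁ x
  have hTinvdom : ∀ x ∈ D.domain, Tinv x ∈ D.domain :=
    SandwichAux.tinv_mem hdense hsa T Tinv hTinv₁ hTinv₂ hTdom hcomm
  have hTsym : ∀ x y : H, ⟪T x, y⟫_ℂ = ⟪x, T y⟫_ℂ := fun x y => hTsa.isSymmetric x y
  have hTinvsym : ∀ x y : H, ⟪Tinv x, y⟫_ℂ = ⟪x, Tinv y⟫_ℂ := by
    intro x y
    calc ⟪Tinv x, y⟫_ℂ = ⟪Tinv x, T (Tinv y)⟫_ℂ := by rw [hTT]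
      _ = ⟪T (Tinv x), Tinv y⟫_ℂ := (hTsym _ _).symm
      _ = ⟪x, Tinv y⟫_ℂ := by rw [hTT]
  constructor
  · apply Set.eq_of_subset_of_subset
    · rintro x ⟨y, hy, rfl⟩
      exact hTinvdom y hy
    · intro x hx
      exact ⟨T x, hTdom x hx, hTinvT x⟩
  · refine ⟨hTinvdom, ?_⟩
    set E : H →ₗ.[ℂ] H := sandwichPMap D Tinv hTinvdom with hE
    have hEdom : E.domain = D.domain := rfl
    have hEdense : Dense (E.domain : Set H) := hdense
    have hEapp : ∀ x : E.domain,
        E x = Tinv (D ⟨Tinv (x : H), hTinvdom _ x.2⟩) := fun x => rfl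
    have hsym : E.IsFormalAdjoint E := by
      intro x y
      rw [hEapp, hEapp]
      calc ⟪Tinv (D ⟨Tinv (x : H), hTinvdom _ x.2⟩), (y : H)⟫_ℂ
          = ⟪(D ⟨Tinv (x : H), hTinvdom _ x.2⟩ : H), Tinv (y : H)⟫_ℂ := hTinvsym _ _
        _ = ⟪(Tinv (x : H) : H), (D ⟨Tinv (y : H), hTinvdom _ y.2⟩ : H)⟫_ℂ :=
            SandwichAux.symmetric hdense hsa ⟨Tinv (x : H), hTinvdom _ x.2⟩
              ⟨Tinv (y : H), hTinvdom _ y.2⟩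
        _ = ⟪(x : H), Tinv (D ⟨Tinv (y : H), hTinvdom _ y.2⟩)⟫_ℂ := hTinvsym _ _
    have hle : E ≤ E.adjoint := hsym.le_adjoint hEdense
    have hdomle : E.adjoint.domain ≤ E.domain := by
      intro ψ hψ
      have hform := LinearPMap.adjoint_isFormalAdjoint (T := E) hEdense
      have h1 : Tinv ψ ∈ D.adjoint.domain := by
        apply LinearPMap.mem_adjoint_domain_of_exists
        refine ⟨T (E.adjoint ⟨ψ, hψ⟩), fun x => ?_⟩
        have hx' : T (x : H) ∈ E.domain := hTdom _ x.2
        have hf := hform ⟨ψ, hψ⟩ ⟨T (x : H), hx'⟩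
        -- hf : ⟪E† ⟨ψ,hψ⟩, T x⟫ = ⟪ψ, E ⟨T x, hx'⟩⟫
        have hETx : E ⟨T (x : H), hx'⟩ = Tinv (D x) := by
          rw [hEapp]
          congr 2
          exact Subtype.ext (hTinvT (x : H))
        calc ⟪T (E.adjoint ⟨ψ, hψ⟩), (x : H)⟫_ℂ
            = ⟪E.adjoint ⟨ψ, hψ⟩, T (x : H)⟫_ℂ := hTsym _ _
          _ = ⟪ψ, E ⟨T (x : H), hx'⟩⟫_ℂ := hf
          _ = ⟪ψ, Tinv (D x)⟫_ℂ := by rw [hETx]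
          _ = ⟪Tinv ψ, (D x : H)⟫_ℂ := (hTinvsym ψ (D x : H)).symm
      have hsa' : D.adjoint = D := hsa
      have h2 : Tinv ψ ∈ D.domain := by rw [← hsa']; exact h1
      have h3 : T (Tinv ψ) ∈ D.domain := hTdom _ h2
      rwa [hTT] at h3
    have heqdom : E.domain = E.adjoint.domain := le_antisymm hle.1 hdomle
    exact (LinearPMap.eq_of_le_of_domain_eq hle heqdom).symm
end

section
/- Let {D_t}_{t∈ℝ} be a family of bounded operators D_t : W → H such that (i) for each t the unbounded operator on H with domain ι(W) sending ιξ to D_t ξ is self-adjoint, (ii) there exist C₁, C₂ > 0 with C₁‖ξ‖_W ≤ (‖ιξ‖_H² + ‖D_t ξ‖_H²)^{1/2} ≤ C₂‖ξ‖_W for all ξ ∈ W and t ∈ ℝ, and (iii) t ↦ D_t ∈ B(W,H) is continuous in the operator norm. Then for each t ∈ ℝ and each sign ±, the operator D_t ± i (with domain ι(W)) has a bounded everywhere-defined inverse R_t^± ∈ B(H) with ‖R_t^±‖ ≤ 1, and the resolvent maps t ↦ R_t^± ∈ B(H) are continuous in the operator norm. -/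
open scoped InnerProductSpace ComplexConjugate LinearPMap


/-- Given an injective bounded map `ι : W → H` with dense range and a bounded operator
`Dt : W → H`, the unbounded operator on `H` with domain `ι(W)` sending `ι ξ` to `Dt ξ`. -/
noncomputable def inducedPMap {W H : Type*} [NormedAddCommGroup W] [InnerProductSpace ℂ W]
    [NormedAddCommGroup H] [InnerProductSpace ℂ H]
    (ι : W →L[ℂ] H) (hinj : Function.Injective ι) (Dt : W →L[ℂ] H) : H →ₗ.[ℂ] H :=
  ⟨LinearMap.range ι.toLinearMap,
    Dt.toLinearMap ∘ₗ (LinearEquiv.ofInjective ι.toLinearMap hinj).symm.toLinearMap⟩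

open scoped InnerProductSpace ComplexConjugate LinearPMap

section Aux

variable {W H : Type*} [NormedAddCommGroup W] [InnerProductSpace ℂ W] [CompleteSpace W]
    [NormedAddCommGroup H] [InnerProductSpace ℂ H] [CompleteSpace H]
    (ι : W →L[ℂ] H) (hinj : Function.Injective ι) (Dt : W →L[ℂ] H)

lemma mem_inducedPMap_domain (ξ : W) : ι ξ ∈ (inducedPMap ι hinj Dt).domain := ⟨ξ, rfl⟩

lemma inducedPMap_apply (ξ : W) (h : ι ξ ∈ (inducedPMap ι hinj Dt).domain) :
    inducedPMap ι hinj Dt ⟨ι ξ, h⟩ = Dt ξ := by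
  show Dt ((LinearEquiv.ofInjective ι.toLinearMap hinj).symm ⟨ι ξ, h⟩) = Dt ξ
  have : (⟨ι ξ, h⟩ : LinearMap.range ι.toLinearMap) =
      LinearEquiv.ofInjective ι.toLinearMap hinj ξ := Subtype.ext rfl
  rw [this, LinearEquiv.symm_apply_apply]

lemma inducedPMap_dense (hdense : DenseRange ι) :
    Dense ((inducedPMap ι hinj Dt).domain : Set H) := by
  show Dense ((LinearMap.range ι.toLinearMap : Submodule ℂ H) : Set H)
  rw [LinearMap.coe_range]
  exact hdense

variable (hdense : DenseRange ι) (hsa : IsSelfAdjoint (inducedPMap ι hinj Dt))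

include hdense hsa in
lemma inducedPMap_symm (ξ η : W) : ⟪Dt ξ, ι η⟫_ℂ = ⟪ι ξ, Dt η⟫_ℂ := by
  have hdom := inducedPMap_dense ι hinj Dt hdense
  have h := LinearPMap.adjoint_isFormalAdjoint hdom
  rw [LinearPMap.isSelfAdjoint_def] at hsa
  rw [hsa] at h
  have := h ⟨ι ξ, mem_inducedPMap_domain ι hinj Dt ξ⟩ ⟨ι η, mem_inducedPMap_domain ι hinj Dt η⟩
  rwa [inducedPMap_apply, inducedPMap_apply] at this

include hdense hsa in
lemma inducedPMap_inner_real (ξ : W) : (⟪Dt ξ, ι ξ⟫_ℂ).im = 0 := by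
  have h : conj ⟪ι ξ, Dt ξ⟫_ℂ = ⟪ι ξ, Dt ξ⟫_ℂ := by
    rw [inner_conj_symm]
    exact inducedPMap_symm ι hinj Dt hdense hsa ξ ξ
  have h2 : (⟪ι ξ, Dt ξ⟫_ℂ).im = 0 := Complex.conj_eq_iff_im.mp h
  rw [← inner_conj_symm (Dt ξ) (ι ξ), Complex.conj_im, h2, neg_zero]

include hdense hsa in
lemma graph_norm_eq (ε : ℂ) (hεre : ε.re = 0) (hεn : ‖ε‖ = 1) (ξ : W) :
    ‖Dt ξ + ε • ι ξ‖ = Real.sqrt (‖ι ξ‖ ^ 2 + ‖Dt ξ‖ ^ 2) := by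
  have him := inducedPMap_inner_real ι hinj Dt hdense hsa ξ
  have h2 : ‖Dt ξ + ε • ι ξ‖ ^ 2 = ‖ι ξ‖ ^ 2 + ‖Dt ξ‖ ^ 2 := by
    rw [@norm_add_sq ℂ, inner_smul_right, norm_smul, hεn, one_mul]
    have : RCLike.re (ε * ⟪Dt ξ, ι ξ⟫_ℂ) = 0 := by
      simp only [RCLike.re_to_complex, Complex.mul_re, hεre, him]
      ring
    rw [this]
    ring
  rw [← h2, Real.sqrt_sq (norm_nonneg _)]



set_option linter.unusedSectionVars false

include hdense hsa in
lemma resolvent_exists (C₁ : ℝ) (hC₁ : 0 < C₁)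
    (hlow : ∀ ξ : W, C₁ * ‖ξ‖ ≤ Real.sqrt (‖ι ξ‖ ^ 2 + ‖Dt ξ‖ ^ 2))
    (ε : ℂ) (hε : ε = Complex.I ∨ ε = -Complex.I) :
    ∃ R : H →L[ℂ] H, ‖R‖ ≤ 1 ∧ (∀ ξ : W, R (Dt ξ + ε • ι ξ) = ι ξ) ∧
      ∀ x : H, ∃ ξ : W, R x = ι ξ ∧ Dt ξ + ε • ι ξ = x := by
  have hεre : ε.re = 0 := by rcases hε with h | h <;> simp [h]
  have hεn : ‖ε‖ = 1 := by rcases hε with h | h <;> simp [h]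
  have hεim : ε.im = 1 ∨ ε.im = -1 := by rcases hε with h | h <;> simp [h]
  have hdom := inducedPMap_dense ι hinj Dt hdense
  set S : W →L[ℂ] H := Dt + ε • ι with hSdef
  have hSapp : ∀ ξ : W, S ξ = Dt ξ + ε • ι ξ := fun ξ => rfl
  have hgraph : ∀ ξ : W, ‖S ξ‖ = Real.sqrt (‖ι ξ‖ ^ 2 + ‖Dt ξ‖ ^ 2) := fun ξ =>
    graph_norm_eq ι hinj Dt hdense hsa ε hεre hεn ξ
  have hlow' : ∀ ξ : W, C₁ * ‖ξ‖ ≤ ‖S ξ‖ := fun ξ => (hlow ξ).trans_eq (hgraph ξ).symm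
  have hιle : ∀ ξ : W, ‖ι ξ‖ ≤ ‖S ξ‖ := by
    intro ξ
    calc ‖ι ξ‖ = Real.sqrt (‖ι ξ‖ ^ 2) := (Real.sqrt_sq (norm_nonneg _)).symm
      _ ≤ Real.sqrt (‖ι ξ‖ ^ 2 + ‖Dt ξ‖ ^ 2) :=
          Real.sqrt_le_sqrt (le_add_of_nonneg_right (sq_nonneg _))
      _ = ‖S ξ‖ := (hgraph ξ).symm
  -- kernel trivial
  have hker : S.ker = ⊥ := by
    rw [LinearMap.ker_eq_bot']
    intro ξ hξ
    change S ξ = 0 at hξ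
    have := hlow' ξ
    rw [hξ, norm_zero] at this
    have : ‖ξ‖ ≤ 0 := by nlinarith [norm_nonneg ξ]
    simpa [norm_le_zero_iff] using this
  -- range closed
  have hanti : AntilipschitzWith (⟨C₁, hC₁.le⟩ : NNReal)⁻¹ S := by
    apply S.antilipschitz_of_bound
    intro x
    change ‖x‖ ≤ C₁⁻¹ * ‖S x‖
    rw [inv_mul_eq_div, le_div_iff₀ hC₁, mul_comm]
    exact hlow' x
  have hclosed : IsClosed (S.range : Set H) := by
    have : IsClosed (Set.range S) := hanti.isClosed_range S.uniformContinuous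
    simpa [LinearMap.coe_range] using this
  -- range dense
  have hortho : (S.range)ᗮ = ⊥ := by
    rw [Submodule.eq_bot_iff]
    intro y hy
    have horth : ∀ ξ : W, ⟪S ξ, y⟫_ℂ = 0 := fun ξ =>
      (Submodule.mem_orthogonal _ y).mp hy (S ξ) ⟨ξ, rfl⟩
    set w : H := (-(conj ε)) • y with hwdef
    have hw : ∀ x : (inducedPMap ι hinj Dt).domain,
        ⟪w, (x : H)⟫_ℂ = ⟪y, inducedPMap ι hinj Dt x⟫_ℂ := by
      rintro ⟨-, ξ, rfl⟩
      have hx : (⟨ι.toLinearMap ξ, ⟨ξ, rfl⟩⟩ : (inducedPMap ι hinj Dt).domain)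
          = ⟨ι ξ, mem_inducedPMap_domain ι hinj Dt ξ⟩ := rfl
      rw [hx, inducedPMap_apply]
      have h0 := congrArg (starRingEnd ℂ) (horth ξ)
      rw [hSapp, inner_add_left, inner_smul_left] at h0
      simp only [map_add, map_mul, inner_conj_symm, RingHomCompTriple.comp_apply,
        RingHom.id_apply, map_zero, Complex.conj_conj] at h0
      -- h0 : ⟪y, Dt ξ⟫ + ε * ⟪y, ι ξ⟫ = 0
      rw [hwdef, inner_smul_left]
      simp only [map_neg, Complex.conj_conj]
      linear_combination -h0
    have hydom : y ∈ (inducedPMap ι hinj Dt).adjoint.domain :=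
      LinearPMap.mem_adjoint_domain_of_exists y ⟨w, hw⟩
    have hyval : (inducedPMap ι hinj Dt).adjoint ⟨y, hydom⟩ = w :=
      LinearPMap.adjoint_apply_eq hdom _ hw
    have hle : (inducedPMap ι hinj Dt).adjoint ≤ inducedPMap ι hinj Dt := le_of_eq hsa
    have hydom' : y ∈ (inducedPMap ι hinj Dt).domain := hle.1 hydom
    have hyval' : inducedPMap ι hinj Dt ⟨y, hydom'⟩ = w := by
      rw [← hyval]; exact (hle.2 rfl).symm
    obtain ⟨η, hη⟩ := hydom'
    have hη' : ι η = y := hη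
    have hDη : Dt η = w := by
      rw [← hyval']
      have : (⟨y, ⟨η, hη⟩⟩ : (inducedPMap ι hinj Dt).domain)
          = ⟨ι η, mem_inducedPMap_domain ι hinj Dt η⟩ := Subtype.ext hη'.symm
      rw [this, inducedPMap_apply]
    have him := inducedPMap_inner_real ι hinj Dt hdense hsa η
    have hval : ⟪Dt η, ι η⟫_ℂ = -ε * ⟪ι η, ι η⟫_ℂ := by
      rw [hDη, hwdef, ← hη', inner_smul_left]
      simp only [map_neg, Complex.conj_conj]
    have h1 : (⟪ι η, ι η⟫_ℂ).im = 0 := inner_self_im (𝕜 := ℂ) (ι η)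
    have h2 : (⟪ι η, ι η⟫_ℂ).re = ‖ι η‖ ^ 2 := inner_self_eq_norm_sq (𝕜 := ℂ) (ι η)
    rw [hval, Complex.mul_im, Complex.neg_re, Complex.neg_im, h1, h2, hεre] at him
    have hn : ι η = 0 := by
      rcases hεim with h | h <;> rw [h] at him <;> simpa using him
    rw [← hη']
    exact hn
  have htop : S.range = ⊤ := by
    have hcl := hclosed.submodule_topologicalClosure_eq
    rw [← hcl]
    exact Submodule.topologicalClosure_eq_top_iff.mpr hortho
  set e : W ≃L[ℂ] H := ContinuousLinearEquiv.ofBijective S hker htop with hedef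
  have he : ∀ ξ : W, e ξ = S ξ := fun ξ => by
    rw [hedef]
    exact congrFun (ContinuousLinearEquiv.coeFn_ofBijective S hker htop) ξ
  have hsolve : ∀ x : H, S ((e.symm : H →L[ℂ] W) x) = x := by
    intro x
    rw [ContinuousLinearEquiv.coe_coe, ← he, e.apply_symm_apply]
  have hback : ∀ ξ : W, (e.symm : H →L[ℂ] W) (S ξ) = ξ := by
    intro ξ
    rw [ContinuousLinearEquiv.coe_coe, ← he, e.symm_apply_apply]
  refine ⟨ι.comp (e.symm : H →L[ℂ] W), ?_, ?_, ?_⟩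
  · apply ContinuousLinearMap.opNorm_le_bound _ zero_le_one
    intro x
    rw [one_mul, ContinuousLinearMap.comp_apply]
    calc ‖ι ((e.symm : H →L[ℂ] W) x)‖ ≤ ‖S ((e.symm : H →L[ℂ] W) x)‖ := hιle _
      _ = ‖x‖ := by rw [hsolve]
  · intro ξ
    rw [ContinuousLinearMap.comp_apply, ← hSapp, hback]
  · intro x
    refine ⟨(e.symm : H →L[ℂ] W) x, rfl, ?_⟩
    rw [← hSapp, hsolve]

omit hinj in
lemma resolvent_diff_bound (C₁ : ℝ) (hC₁ : 0 < C₁) (ε : ℂ)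
    (Ds : W →L[ℂ] H) (Rs Rt : H →L[ℂ] H)
    (hRs_norm : ‖Rs‖ ≤ 1)
    (hRs_fwd : ∀ ξ : W, Rs (Ds ξ + ε • ι ξ) = ι ξ)
    (hRt_surj : ∀ x : H, ∃ ξ : W, Rt x = ι ξ ∧ Dt ξ + ε • ι ξ = x)
    (hlowt : ∀ ξ : W, C₁ * ‖ξ‖ ≤ ‖Dt ξ + ε • ι ξ‖) :
    ‖Rs - Rt‖ ≤ C₁⁻¹ * ‖Ds - Dt‖ := by
  refine ContinuousLinearMap.opNorm_le_bound _ (by positivity) fun x => ?_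
  obtain ⟨ξ, hx1, hx2⟩ := hRt_surj x
  have hξ : ‖ξ‖ ≤ C₁⁻¹ * ‖x‖ := by
    rw [← hx2, inv_mul_eq_div, le_div_iff₀ hC₁, mul_comm]
    exact hlowt ξ
  have key : (Rs - Rt) x = Rs ((Dt - Ds) ξ) := by
    have h1 : (Dt - Ds) ξ = x - (Ds ξ + ε • ι ξ) := by
      rw [← hx2, ContinuousLinearMap.sub_apply]
      abel
    rw [ContinuousLinearMap.sub_apply, hx1, ← hRs_fwd ξ, ← map_sub, h1]
  rw [key]
  calc ‖Rs ((Dt - Ds) ξ)‖ ≤ ‖Rs‖ * ‖(Dt - Ds) ξ‖ := Rs.le_opNorm _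
    _ ≤ 1 * (‖Dt - Ds‖ * ‖ξ‖) :=
        mul_le_mul hRs_norm ((Dt - Ds).le_opNorm ξ) (norm_nonneg _)
          (le_trans (norm_nonneg _) hRs_norm)
    _ = ‖Ds - Dt‖ * ‖ξ‖ := by rw [one_mul, norm_sub_rev]
    _ ≤ ‖Ds - Dt‖ * (C₁⁻¹ * ‖x‖) := by
        apply mul_le_mul_of_nonneg_left hξ (norm_nonneg _)
    _ = C₁⁻¹ * ‖Ds - Dt‖ * ‖x‖ := by ring

end Aux

/-- Let `{D t}` be a family of bounded operators `W → H` such that the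
induced operators on `H` with domain `ι(W)` are self-adjoint, with uniformly equivalent graph
norms, and `t ↦ D t` norm-continuous.  Then the operators `D t ± i` (with domain `ι(W)`)
have everywhere-defined bounded inverses `R t±` of norm at most `1`, and the resolvent maps
`t ↦ R t±` are norm-continuous. -/
theorem resolvents_norm_continuous
    {W H : Type*} [NormedAddCommGroup W] [InnerProductSpace ℂ W] [CompleteSpace W]
    [NormedAddCommGroup H] [InnerProductSpace ℂ H] [CompleteSpace H]
    (ι : W →L[ℂ] H) (hinj : Function.Injective ι) (hdense : DenseRange ι)
    (D : ℝ → W →L[ℂ] H)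
    (hsa : ∀ t : ℝ, IsSelfAdjoint (inducedPMap ι hinj (D t)))
    (C₁ C₂ : ℝ) (hC₁ : 0 < C₁) (hC₂ : 0 < C₂)
    (hlow : ∀ (t : ℝ) (ξ : W), C₁ * ‖ξ‖ ≤ Real.sqrt (‖ι ξ‖ ^ 2 + ‖D t ξ‖ ^ 2))
    (hup : ∀ (t : ℝ) (ξ : W), Real.sqrt (‖ι ξ‖ ^ 2 + ‖D t ξ‖ ^ 2) ≤ C₂ * ‖ξ‖)
    (hD : Continuous D) :
    ∃ Rp Rm : ℝ → H →L[ℂ] H,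
      (∀ t : ℝ, ‖Rp t‖ ≤ 1 ∧ ‖Rm t‖ ≤ 1) ∧
      (∀ (t : ℝ) (ξ : W),
        Rp t (D t ξ + Complex.I • ι ξ) = ι ξ ∧ Rm t (D t ξ - Complex.I • ι ξ) = ι ξ) ∧
      (∀ (t : ℝ) (x : H),
        (∃ ξ : W, Rp t x = ι ξ ∧ D t ξ + Complex.I • ι ξ = x) ∧
        (∃ ξ : W, Rm t x = ι ξ ∧ D t ξ - Complex.I • ι ξ = x)) ∧
      Continuous Rp ∧ Continuous Rm := by
  have hsub : ∀ (t : ℝ) (ξ : W), D t ξ - Complex.I • ι ξ = D t ξ + (-Complex.I) • ι ξ := by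
    intro t ξ
    rw [neg_smul, ← sub_eq_add_neg]
  choose Rp hRp_norm hRp_fwd hRp_surj using fun t =>
    resolvent_exists ι hinj (D t) hdense (hsa t) C₁ hC₁ (hlow t) Complex.I (Or.inl rfl)
  choose Rm hRm_norm hRm_fwd hRm_surj using fun t =>
    resolvent_exists ι hinj (D t) hdense (hsa t) C₁ hC₁ (hlow t) (-Complex.I) (Or.inr rfl)
  have hlow' : ∀ (t : ℝ) (ε : ℂ), ε.re = 0 → ‖ε‖ = 1 →
      ∀ ξ : W, C₁ * ‖ξ‖ ≤ ‖D t ξ + ε • ι ξ‖ := by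
    intro t ε h1 h2 ξ
    rw [graph_norm_eq ι hinj (D t) hdense (hsa t) ε h1 h2 ξ]
    exact hlow t ξ
  have hbp : ∀ s t : ℝ, ‖Rp s - Rp t‖ ≤ C₁⁻¹ * ‖D s - D t‖ := fun s t =>
    resolvent_diff_bound ι (D t) C₁ hC₁ Complex.I (D s) (Rp s) (Rp t)
      (hRp_norm s) (hRp_fwd s) (hRp_surj t) (hlow' t Complex.I (by simp) (by simp))
  have hbm : ∀ s t : ℝ, ‖Rm s - Rm t‖ ≤ C₁⁻¹ * ‖D s - D t‖ := fun s t =>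
    resolvent_diff_bound ι (D t) C₁ hC₁ (-Complex.I) (D s) (Rm s) (Rm t)
      (hRm_norm s) (hRm_fwd s) (hRm_surj t) (hlow' t (-Complex.I) (by simp) (by simp))
  have hcont : ∀ (R : ℝ → H →L[ℂ] H),
      (∀ s t : ℝ, ‖R s - R t‖ ≤ C₁⁻¹ * ‖D s - D t‖) → Continuous R := by
    intro R hb
    rw [continuous_iff_continuousAt]
    intro t
    rw [ContinuousAt, tendsto_iff_dist_tendsto_zero]
    have hlim : Filter.Tendsto (fun s => C₁⁻¹ * dist (D s) (D t)) (nhds t) (nhds 0) := by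
      have hc : Continuous fun s => C₁⁻¹ * dist (D s) (D t) :=
        continuous_const.mul (hD.dist continuous_const)
      have := hc.tendsto t
      simpa using this
    refine squeeze_zero (fun s => dist_nonneg) (fun s => ?_) hlim
    rw [dist_eq_norm, dist_eq_norm]
    exact hb s t
  refine ⟨Rp, Rm, fun t => ⟨hRp_norm t, hRm_norm t⟩, fun t ξ => ⟨hRp_fwd t ξ, ?_⟩,
    fun t x => ⟨hRp_surj t x, ?_⟩, hcont Rp hbp, hcont Rm hbm⟩
  · rw [hsub t ξ]
    exact hRm_fwd t ξ
  · obtain ⟨ξ, h1, h2⟩ := hRm_surj t x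
    exact ⟨ξ, h1, by rw [hsub t ξ]; exact h2⟩
end

section
/- Let {D_t}_{t∈ℝ} be as follows: D_t : W → H bounded, for each t the unbounded operator on H with domain ι(W) sending ιξ to D_t ξ is self-adjoint, the graph norms are uniformly equivalent to the W-norm (there exist C₁, C₂ > 0 with C₁‖ξ‖_W ≤ (‖ιξ‖_H² + ‖D_t ξ‖_H²)^{1/2} ≤ C₂‖ξ‖_W for all ξ, t), and t ↦ D_t ∈ B(W,H) is norm-continuous; write R_t := (D_t + i)⁻¹ ∈ B(H). Let t ↦ π_t ∈ B(H) be norm-continuous with sup_{t∈ℝ} ‖π_t‖ < ∞, and suppose π_t R_t is a compact operator for each t ∈ ℝ. Then for every continuous function f : ℝ → ℂ vanishing at infinity, the map t ↦ f(t) π_t R_t is norm-continuous, takes values in the compact operators on H, and its operator norm tends to 0 as |t| → ∞. -/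
lemma inducedPMap_apply' {W H : Type*} [NormedAddCommGroup W] [InnerProductSpace ℂ W]
    [NormedAddCommGroup H] [InnerProductSpace ℂ H]
    (ι : W →L[ℂ] H) (hinj : Function.Injective ι) (Dt : W →L[ℂ] H) (ξ : W) :
    inducedPMap ι hinj Dt ⟨ι ξ, ⟨ξ, rfl⟩⟩ = Dt ξ := by
  show Dt ((LinearEquiv.ofInjective ι.toLinearMap hinj).symm ⟨ι ξ, ⟨ξ, rfl⟩⟩) = Dt ξ
  congr 1
  exact (LinearEquiv.symm_apply_eq _).mpr rfl

/-- Symmetry of the induced operator, extracted from self-adjointness. -/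
lemma inducedPMap_symm_s11 {W H : Type*} [NormedAddCommGroup W] [InnerProductSpace ℂ W]
    [NormedAddCommGroup H] [InnerProductSpace ℂ H] [CompleteSpace H]
    (ι : W →L[ℂ] H) (hinj : Function.Injective ι) (Dt : W →L[ℂ] H)
    (hsa : IsSelfAdjoint (inducedPMap ι hinj Dt)) (ξ η : W) :
    (inner ℂ (Dt ξ) (ι η) : ℂ) = inner ℂ (ι ξ) (Dt η) := by
  have hd : Dense ((inducedPMap ι hinj Dt).domain : Set H) := hsa.dense_domain
  have hA : (inducedPMap ι hinj Dt).adjoint = inducedPMap ι hinj Dt := hsa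
  obtain ⟨hdom, happ⟩ := LinearPMap.ext_iff.mp hA
  have hFA := LinearPMap.adjoint_isFormalAdjoint hd
  have hmemξ : ι ξ ∈ (inducedPMap ι hinj Dt).adjoint.domain := by
    rw [hdom]; exact ⟨ξ, rfl⟩
  have h1 := hFA ⟨ι ξ, hmemξ⟩ ⟨ι η, ⟨η, rfl⟩⟩
  have h2 : (inducedPMap ι hinj Dt).adjoint ⟨ι ξ, hmemξ⟩ = Dt ξ := by
    rw [happ (x := ι ξ) (hf := hmemξ) (hg := ⟨ξ, rfl⟩), inducedPMap_apply']
  rw [h2, inducedPMap_apply'] at h1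
  exact h1

/-- Let `{D t}` be a norm-continuous family of bounded operators `W → H`
whose induced operators on `H` (with domain `ι(W)`) are self-adjoint, with uniformly
equivalent graph norms, and resolvents `R t = (D t + i)⁻¹`.  Let `t ↦ π t ∈ B(H)` be
norm-continuous and uniformly bounded, with `π t ∘ R t` compact for every `t`.  Then for
every continuous `f : ℝ → ℂ` vanishing at infinity, the map `t ↦ f t • (π t ∘ R t)` is
norm-continuous, takes values in the compact operators, and its norm tends to `0` at
infinity. -/
theorem smul_pi_resolvent_c0
    {W H : Type*} [NormedAddCommGroup W] [InnerProductSpace ℂ W] [CompleteSpace W]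
    [NormedAddCommGroup H] [InnerProductSpace ℂ H] [CompleteSpace H]
    (ι : W →L[ℂ] H) (hinj : Function.Injective ι) (hdense : DenseRange ι)
    (D : ℝ → W →L[ℂ] H)
    (hsa : ∀ t : ℝ, IsSelfAdjoint (inducedPMap ι hinj (D t)))
    (C₁ C₂ : ℝ) (hC₁ : 0 < C₁) (hC₂ : 0 < C₂)
    (hlow : ∀ (t : ℝ) (ξ : W), C₁ * ‖ξ‖ ≤ Real.sqrt (‖ι ξ‖ ^ 2 + ‖D t ξ‖ ^ 2))
    (hup : ∀ (t : ℝ) (ξ : W), Real.sqrt (‖ι ξ‖ ^ 2 + ‖D t ξ‖ ^ 2) ≤ C₂ * ‖ξ‖)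
    (hD : Continuous D)
    (R : ℝ → H →L[ℂ] H)
    (hR₁ : ∀ (t : ℝ) (ξ : W), R t (D t ξ + Complex.I • ι ξ) = ι ξ)
    (hR₂ : ∀ (t : ℝ) (x : H), ∃ ξ : W, R t x = ι ξ ∧ D t ξ + Complex.I • ι ξ = x)
    (π : ℝ → H →L[ℂ] H) (hπ : Continuous π)
    (Cπ : ℝ) (hπbdd : ∀ t : ℝ, ‖π t‖ ≤ Cπ)
    (hcpt : ∀ t : ℝ, IsCompactOperator ((π t).comp (R t)))
    (f : ℝ → ℂ) (hf : Continuous f)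
    (hf0 : Filter.Tendsto f (Filter.cocompact ℝ) (nhds 0)) :
    Continuous (fun t : ℝ => f t • (π t).comp (R t)) ∧
      (∀ t : ℝ, IsCompactOperator (f t • (π t).comp (R t))) ∧
      Filter.Tendsto (fun t : ℝ => ‖f t • (π t).comp (R t)‖)
        (Filter.cocompact ℝ) (nhds 0) := by
  -- norm identity
  have key : ∀ (t : ℝ) (ξ : W),
      ‖D t ξ + Complex.I • ι ξ‖ ^ 2 = ‖D t ξ‖ ^ 2 + ‖ι ξ‖ ^ 2 := by
    intro t ξ
    have hsym := inducedPMap_symm_s11 ι hinj (D t) (hsa t) ξ ξ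
    have hre : (inner ℂ (D t ξ) (Complex.I • ι ξ) : ℂ).re = 0 := by
      rw [inner_smul_right]
      have him : (inner ℂ (D t ξ) (ι ξ) : ℂ).im = 0 := by
        have hc : (starRingEnd ℂ) (inner ℂ (D t ξ) (ι ξ) : ℂ) = inner ℂ (D t ξ) (ι ξ) := by
          rw [inner_conj_symm]; exact hsym.symm
        exact Complex.conj_eq_iff_im.mp hc
      simp [Complex.mul_re, him]
    have := @norm_add_sq ℂ _ _ _ _ (D t ξ) (Complex.I • ι ξ)
    rw [this]
    have : ‖Complex.I • ι ξ‖ = ‖ι ξ‖ := by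
      rw [norm_smul]; simp
    rw [this]
    simp [RCLike.re_to_complex, hre]
  -- ‖R t‖ ≤ 1
  have hRnorm : ∀ t : ℝ, ‖R t‖ ≤ 1 := by
    intro t
    refine ContinuousLinearMap.opNorm_le_bound _ zero_le_one fun x => ?_
    obtain ⟨ξ, h1, h2⟩ := hR₂ t x
    rw [h1, one_mul]
    have hx2 : ‖x‖ ^ 2 = ‖D t ξ‖ ^ 2 + ‖ι ξ‖ ^ 2 := by rw [← h2]; exact key t ξ
    have h3 : ‖ι ξ‖ ^ 2 ≤ ‖x‖ ^ 2 := by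
      rw [hx2]; nlinarith [sq_nonneg ‖(D t) ξ‖]
    nlinarith [norm_nonneg (ι ξ), norm_nonneg x]
  -- lipschitz estimate for R
  have hRlip : ∀ s t : ℝ, ‖R s - R t‖ ≤ C₁⁻¹ * ‖D s - D t‖ := by
    intro s t
    refine ContinuousLinearMap.opNorm_le_bound _ (by positivity) fun x => ?_
    obtain ⟨ξ, h1, h2⟩ := hR₂ t x
    have hx2 : ‖x‖ ^ 2 = ‖D t ξ‖ ^ 2 + ‖ι ξ‖ ^ 2 := by rw [← h2]; exact key t ξ
    have hξ : C₁ * ‖ξ‖ ≤ ‖x‖ := by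
      have := hlow t ξ
      have hs : Real.sqrt (‖ι ξ‖ ^ 2 + ‖D t ξ‖ ^ 2) = ‖x‖ := by
        rw [show ‖ι ξ‖ ^ 2 + ‖D t ξ‖ ^ 2 = ‖x‖ ^ 2 by rw [hx2]; ring]
        exact Real.sqrt_sq (norm_nonneg x)
      linarith [hs ▸ this]
    have hdiff : (R s - R t) x = R s ((D t - D s) ξ) := by
      have : (R s) x - ι ξ = R s ((D t - D s) ξ) := by
        conv_lhs => rw [← hR₁ s ξ]
        rw [← map_sub]
        congr 1
        rw [← h2]
        simp [sub_add_eq_sub_sub]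
        abel
      simpa [h1] using this
    rw [hdiff]
    calc ‖R s ((D t - D s) ξ)‖ ≤ ‖R s‖ * ‖(D t - D s) ξ‖ :=
          (R s).le_opNorm _
      _ ≤ 1 * (‖D t - D s‖ * ‖ξ‖) :=
          mul_le_mul (hRnorm s) ((D t - D s).le_opNorm ξ) (norm_nonneg _)
            zero_le_one
      _ = ‖D s - D t‖ * ‖ξ‖ := by rw [one_mul, norm_sub_rev]
      _ ≤ ‖D s - D t‖ * (C₁⁻¹ * ‖x‖) := by
          apply mul_le_mul_of_nonneg_left _ (norm_nonneg _)
          rw [le_inv_mul_iff₀ hC₁]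
          linarith
      _ = C₁⁻¹ * ‖D s - D t‖ * ‖x‖ := by ring
  -- continuity of R
  have hRcont : Continuous R := by
    rw [Metric.continuous_iff]
    intro t ε hε
    rw [Metric.continuous_iff] at hD
    obtain ⟨δ, hδ, hδ'⟩ := hD t (C₁ * ε) (by positivity)
    refine ⟨δ, hδ, fun s hs => ?_⟩
    have := hRlip s t
    simp only [dist_eq_norm] at hδ' ⊢
    calc ‖R s - R t‖ ≤ C₁⁻¹ * ‖D s - D t‖ := this
      _ < C₁⁻¹ * (C₁ * ε) := by
          apply mul_lt_mul_of_pos_left _ (by positivity)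
          exact hδ' s hs
      _ = ε := by field_simp
  have hcomp : Continuous fun t => (π t).comp (R t) := hπ.clm_comp hRcont
  refine ⟨hf.smul hcomp, fun t => (hcpt t).smul (f t), ?_⟩
  have hCπ : 0 ≤ Cπ := (norm_nonneg (π 0)).trans (hπbdd 0)
  have hbound : ∀ t : ℝ, ‖f t • (π t).comp (R t)‖ ≤ ‖f t‖ * Cπ := by
    intro t
    rw [norm_smul]
    apply mul_le_mul_of_nonneg_left _ (norm_nonneg _)
    calc ‖(π t).comp (R t)‖ ≤ ‖π t‖ * ‖R t‖ := ContinuousLinearMap.opNorm_comp_le _ _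
      _ ≤ Cπ * 1 := mul_le_mul (hπbdd t) (hRnorm t) (norm_nonneg _) hCπ
      _ = Cπ := mul_one _
  have htend : Filter.Tendsto (fun t => ‖f t‖ * Cπ) (Filter.cocompact ℝ) (nhds 0) := by
    have := (hf0.norm).mul_const Cπ
    simpa using this
  exact squeeze_zero (fun t => norm_nonneg _) hbound htend
end
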